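/- Let α ∈ 𝕋 be non-periodic under the doubling map and let g ∈ {L,R}^n. Then there exists a unique word u ∈ {L,R,⋆}^n such that u agrees with g at every digit where u is not ⋆, C(u) is a generalized cylinder set of degree n−1, and both g̃(⋆₁) and g̃(⋆₂) belong to C(u). This u is denoted legal(g). -/

import Mathlib

open Set MeasureTheory Filter
open scoped Classical

noncomputable section

/-- The circle `ℝ/ℤ`. -/
abbrev 𝕋 := AddCircle (1 : ℝ)

/-- The doubling map `h(x) = 2x` on the circle. -/
def dbl (x : 𝕋) : 𝕋 := x + x

/-- The representative of a point of the circle lying in `[0,1)`. -/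
def rep (x : 𝕋) : ℝ := (AddCircle.equivIco 1 0 x : ℝ)

/-- `⋆₁ = α/2`. -/
def star1 (α : 𝕋) : 𝕋 := ((rep α / 2 : ℝ) : 𝕋)

/-- `⋆₂ = α/2 + 1/2`. -/
def star2 (α : 𝕋) : 𝕋 := ((rep α / 2 + 1 / 2 : ℝ) : 𝕋)

/-- The closed semicircle `C(L) = {α/2 + t : t ∈ [0,1/2]}`. -/
def arcL (α : 𝕋) : Set 𝕋 := (fun t : ℝ => ((rep α / 2 + t : ℝ) : 𝕋)) '' Set.Icc 0 (1 / 2)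

/-- The closed semicircle `C(R) = {α/2 + 1/2 + t : t ∈ [0,1/2]}`. -/
def arcR (α : 𝕋) : Set 𝕋 :=
  (fun t : ℝ => ((rep α / 2 + 1 / 2 + t : ℝ) : 𝕋)) '' Set.Icc 0 (1 / 2)

/-- The open semicircle `{α/2 + t : t ∈ (0,1/2)}`. -/
def openArcL (α : 𝕋) : Set 𝕋 := (fun t : ℝ => ((rep α / 2 + t : ℝ) : 𝕋)) '' Set.Ioo 0 (1 / 2)

/-- The open semicircle `{α/2 + 1/2 + t : t ∈ (0,1/2)}`. -/
def openArcR (α : 𝕋) : Set 𝕋 :=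
  (fun t : ℝ => ((rep α / 2 + 1 / 2 + t : ℝ) : 𝕋)) '' Set.Ioo 0 (1 / 2)

/-- The alphabet `{L, R, ⋆}`. -/
inductive Letter | L | R | star
deriving DecidableEq

/-- `itin α x n` is the `(n+1)`-st letter of the itinerary `I^α(x)`. -/
def itin (α x : 𝕋) (n : ℕ) : Letter :=
  if dbl^[n] x = star1 α ∨ dbl^[n] x = star2 α then Letter.star
  else if dbl^[n] x ∈ openArcL α then Letter.L else Letter.R

/-- The lamination `x ≈_α y`. -/
def approx (α : 𝕋) (x y : 𝕋) : Prop :=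
  ∀ n : ℕ, itin α x n = itin α y n ∨ itin α x n = Letter.star ∨ itin α y n = Letter.star

/-- A point is periodic under the doubling map. -/
def IsPeriodicPt' (x : 𝕋) : Prop := ∃ k : ℕ, 1 ≤ k ∧ dbl^[k] x = x

/-- `α` is periodic under the doubling map. -/
def Periodic' (α : 𝕋) : Prop := IsPeriodicPt' α

/-- `α` is pre-periodic under the doubling map. -/
def PrePeriodic (α : 𝕋) : Prop := ∃ m : ℕ, IsPeriodicPt' (dbl^[m] α)

/-- `D` is a gluing link with `n` arcs with respect to `≈_α`: a disjoint union of `n` closed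
arcs whose `2n` endpoints occur in counterclockwise cyclic order and are consecutively glued
by `≈_α`. -/
def IsGluingLink (α : 𝕋) (n : ℕ) (D : Set 𝕋) : Prop :=
  0 < n ∧ ∃ s e : ℕ → ℝ,
    (∀ i < n, s i ≤ e i) ∧
    (∀ i j : ℕ, i < j → j < n → e i < s j) ∧
    (∀ i < n, ∀ j < n, e j < s i + 1) ∧
    D = ⋃ i ∈ Finset.range n, (fun t : ℝ => (t : 𝕋)) '' Set.Icc (s i) (e i) ∧
    (∀ i < n, approx α ((e i : ℝ) : 𝕋) ((s ((i + 1) % n) : ℝ) : 𝕋))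

/-- `L̃(x)`: the `h`-preimage of `x` in the interior of `C(L)` (for `x ≠ α`). -/
def tldL (α x : 𝕋) : 𝕋 :=
  if ((rep x / 2 : ℝ) : 𝕋) ∈ openArcL α then ((rep x / 2 : ℝ) : 𝕋)
  else ((rep x / 2 + 1 / 2 : ℝ) : 𝕋)

/-- `R̃(x)`: the `h`-preimage of `x` in the interior of `C(R)` (for `x ≠ α`). -/
def tldR (α x : 𝕋) : 𝕋 :=
  if ((rep x / 2 : ℝ) : 𝕋) ∈ openArcR α then ((rep x / 2 : ℝ) : 𝕋)
  else ((rep x / 2 + 1 / 2 : ℝ) : 𝕋)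

/-- The inverse branch associated with a single letter of `{L,R}`
(`true` codes `L`, `false` codes `R`). -/
def tldB (α : 𝕋) (b : Bool) (x : 𝕋) : 𝕋 := if b then tldL α x else tldR α x

/-- `g̃ = g̃[1] ∘ ⋯ ∘ g̃[n]` for a word `g ∈ {L,R}^*`. -/
def wtld (α : 𝕋) (g : List Bool) (x : 𝕋) : 𝕋 := g.foldr (fun b y => tldB α b y) x

/-- The embedding `e(θ) = exp(2πiθ)` of the circle into `ℂ`. -/
def emb (x : 𝕋) : ℂ := Complex.exp (2 * Real.pi * Complex.I * (rep x))

/-- The chord of a pair of points of the circle: the closed Euclidean segment joining their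
images in `ℂ`. -/
def chord (a b : 𝕋) : Set ℂ := segment ℝ (emb a) (emb b)

/-- The union of all chords `l_g` for words `g ∈ {L,R}^n`. -/
def chordsUnion (α : 𝕋) (n : ℕ) : Set ℂ :=
  ⋃ g ∈ {g : List Bool | g.length = n},
    chord (wtld α g (star1 α)) (wtld α g (star2 α))

/-- The closed unit disk minus the chords of level `n`. -/
def diskMinus (α : 𝕋) (n : ℕ) : Set ℂ := Metric.closedBall (0 : ℂ) 1 \ chordsUnion α n

/-- `C` is a generalized cylinder set of degree `n`: the trace on the circle of the closure of
a connected component of the closed unit disk minus the chords of level `n`. -/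
def IsGCS (α : 𝕋) (n : ℕ) (C : Set 𝕋) : Prop :=
  ∃ z ∈ diskMinus α n,
    C = {x : 𝕋 | emb x ∈ closure (connectedComponentIn (diskMinus α n) z)}

/-- The closed region of the circle associated with a letter (`⋆` imposes no restriction). -/
def semi (α : 𝕋) : Letter → Set 𝕋
  | Letter.L => arcL α
  | Letter.R => arcR α
  | Letter.star => Set.univ

/-- `C(u)` for a word `u ∈ {L,R,⋆}^m`. -/
def cylSet (α : 𝕋) (u : List Letter) : Set 𝕋 :=
  {x : 𝕋 | ∀ i < u.length, dbl^[i] x ∈ semi α (u.getD i Letter.star)}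

/-- The digit sequence of `I(α) = I^α(α)` (0-indexed: `ia α n` is the `(n+1)`-st digit). -/
def ia (α : 𝕋) (n : ℕ) : Letter := itin α α n

/-- A set `ℛ ⊆ ℕ` of indices is `D`-rare. -/
def DRare (D : ℕ) (R : Finset ℕ) : Prop :=
  ∀ i : ℕ, (R.filter (fun j => i ≤ j ∧ j ≤ i + D)).card ≤ 3

/-- The `i`-th digit (1-based) of `I(α)[1..n]` is `(D,ℛ)`-duplicating. -/
def DupDigit (α : 𝕋) (D : ℕ) (R : Finset ℕ) (n i : ℕ) : Prop :=
  ∃ a b : ℕ, 1 ≤ a ∧ a ≤ i ∧ i ≤ b ∧ b ≤ n ∧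
    (∀ j, a ≤ j → j ≤ b → j ∉ R → ia α (j - 1) = ia α (j - a)) ∧
    (b = n ∨ D < b - a + 1)


/-- `α` is strongly recurrent. -/
def StronglyRecurrent (α : 𝕋) : Prop :=
  ∀ D : ℕ, 0 < D → ∀ τ : ℝ, τ < 1 →
    ∃ n : ℕ, D < n ∧ ∃ R : Finset ℕ, R ⊆ Finset.Icc 1 n ∧ DRare D R ∧
      τ * n < ((Finset.Icc 1 n).filter (fun i => DupDigit α D R n i)).card

/-- `α` is weakly pre-periodic with period `k`. -/
def WeaklyPrePeriodicWith (α : 𝕋) (k : ℕ) : Prop :=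
  1 ≤ k ∧ ∃ m : ℕ, 1 ≤ m ∧ ∃ X : Letter, (X = Letter.L ∨ X = Letter.R) ∧
    ∀ n : ℕ, ia α (m + k * n - 1) = X

/-- `α` is weakly pre-periodic (for some period). -/
def WeaklyPrePeriodic (α : 𝕋) : Prop := ∃ k : ℕ, WeaklyPrePeriodicWith α k

end

/-- `u` is the legal word associated with `g ∈ {L,R}^*`: `u` agrees with `g` at every digit
where `u` is not `⋆`, `C(u)` is a generalized cylinder set of degree `|g| - 1`, and `C(u)`
contains both `g̃(⋆₁)` and `g̃(⋆₂)`. (`true` codes the letter `L`, `false` codes `R`.) -/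
def IsLegalOf (α : 𝕋) (g : List Bool) (u : List Letter) : Prop :=
  u.length = g.length ∧
  (∀ i < g.length, u.getD i Letter.star ≠ Letter.star →
    u.getD i Letter.star = (if g.getD i true then Letter.L else Letter.R)) ∧
  IsGCS α (g.length - 1) (cylSet α u) ∧
  wtld α g (star1 α) ∈ cylSet α u ∧ wtld α g (star2 α) ∈ cylSet α u

namespace St12
open Real Set

lemma rep_mem_Ico (x : 𝕋) : rep x ∈ Set.Ico (0:ℝ) 1 := by
  have h := (AddCircle.equivIco 1 0 x).2
  simpa [rep] using h

lemma rep_nonneg (x : 𝕋) : 0 ≤ rep x := (rep_mem_Ico x).1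
lemma rep_lt_one (x : 𝕋) : rep x < 1 := by simpa using (rep_mem_Ico x).2

lemma coe_rep (x : 𝕋) : ((rep x : ℝ) : 𝕋) = x := by
  change (AddCircle.equivIco 1 0).symm _ = x
  · exact (AddCircle.equivIco 1 0).symm_apply_apply x

lemma rep_coe (t : ℝ) : rep ((t : ℝ) : 𝕋) = Int.fract t := by
  have h : ((AddCircle.equivIco 1 0) ((t:ℝ) : 𝕋) : ℝ) = Int.fract (t / 1) * 1 :=
    AddCircle.coe_equivIco_mk_apply (p := (1:ℝ)) t
  simpa [rep] using h

lemma rep_coe_of_mem (t : ℝ) (h0 : 0 ≤ t) (h1 : t < 1) : rep ((t : ℝ) : 𝕋) = t := by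
  rw [rep_coe, Int.fract_eq_self.2 ⟨h0, h1⟩]

lemma rep_injective : Function.Injective rep := by
  intro x y h
  rw [← coe_rep x, ← coe_rep y, h]

lemma coe_add_coe (s t : ℝ) : ((s : ℝ) : 𝕋) + ((t : ℝ) : 𝕋) = ((s + t : ℝ) : 𝕋) := by
  norm_cast

lemma coe_sub_one (t : ℝ) : ((t - 1 : ℝ) : 𝕋) = ((t : ℝ) : 𝕋) := by
  have : ((1 : ℝ) : 𝕋) = 0 := by
    simpa using AddCircle.coe_period (p := (1:ℝ))
  calc ((t - 1 : ℝ) : 𝕋) = ((t : ℝ) : 𝕋) - ((1:ℝ) : 𝕋) := by norm_cast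
  _ = ((t : ℝ) : 𝕋) := by rw [this, sub_zero]

lemma coe_add_one (t : ℝ) : ((t + 1 : ℝ) : 𝕋) = ((t : ℝ) : 𝕋) := by
  have := coe_sub_one (t + 1)
  simpa using this.symm

lemma dbl_coe (t : ℝ) : dbl ((t : ℝ) : 𝕋) = ((2 * t : ℝ) : 𝕋) := by
  rw [dbl, coe_add_coe]; ring_nf

lemma dbl_eq (x : 𝕋) : dbl x = ((2 * rep x : ℝ) : 𝕋) := by
  conv_lhs => rw [← coe_rep x]
  exact dbl_coe _

lemma dbl_iter_coe (k : ℕ) (t : ℝ) : dbl^[k] ((t : ℝ) : 𝕋) = ((2^k * t : ℝ) : 𝕋) := by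
  induction k generalizing t with
  | zero => simp
  | succ k ih =>
      rw [Function.iterate_succ_apply, dbl_coe, ih]
      ring_nf

end St12
namespace St12
open Real Set

section PtApi
variable (α : 𝕋)

lemma mem_arcL_iff (x : 𝕋) :
    x ∈ arcL α ↔ rep α / 2 ≤ rep x ∧ rep x ≤ rep α / 2 + 1/2 := by
  have ha0 := rep_nonneg α; have ha1 := rep_lt_one α
  constructor
  · rintro ⟨t, ht, rfl⟩
    dsimp only
    rw [rep_coe_of_mem _ (by linarith [ht.1]) (by linarith [ht.2])]
    constructor <;> [linarith [ht.1]; linarith [ht.2]]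
  · rintro ⟨h1, h2⟩
    exact ⟨rep x - rep α / 2, ⟨by linarith, by linarith⟩, by
      dsimp only
      rw [show rep α / 2 + (rep x - rep α / 2) = rep x by ring, coe_rep]⟩

lemma mem_openArcL_iff (x : 𝕋) :
    x ∈ openArcL α ↔ rep α / 2 < rep x ∧ rep x < rep α / 2 + 1/2 := by
  have ha0 := rep_nonneg α; have ha1 := rep_lt_one α
  constructor
  · rintro ⟨t, ht, rfl⟩
    dsimp only
    rw [rep_coe_of_mem _ (by linarith [ht.1]) (by linarith [ht.2])]
    constructor <;> [linarith [ht.1]; linarith [ht.2]]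
  · rintro ⟨h1, h2⟩
    exact ⟨rep x - rep α / 2, ⟨by linarith, by linarith⟩, by
      dsimp only
      rw [show rep α / 2 + (rep x - rep α / 2) = rep x by ring, coe_rep]⟩

lemma mem_arcR_iff (x : 𝕋) :
    x ∈ arcR α ↔ rep x ≤ rep α / 2 ∨ rep α / 2 + 1/2 ≤ rep x := by
  have ha0 := rep_nonneg α; have ha1 := rep_lt_one α
  have hx0 := rep_nonneg x; have hx1 := rep_lt_one x
  constructor
  · rintro ⟨t, ht, rfl⟩
    dsimp only at *
    rcases lt_or_ge (rep α / 2 + 1/2 + t) 1 with h | h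
    · rw [rep_coe_of_mem _ (by linarith [ht.1]) h]
      right; linarith [ht.1]
    · rw [show ((rep α / 2 + 1/2 + t : ℝ) : 𝕋)
          = ((rep α / 2 + 1/2 + t - 1 : ℝ) : 𝕋) from (coe_sub_one _).symm,
        rep_coe_of_mem _ (by linarith) (by linarith [ht.2])]
      left; linarith [ht.2]
  · rintro (h | h)
    · refine ⟨rep x + 1/2 - rep α / 2, ⟨by linarith, by linarith⟩, ?_⟩
      dsimp only
      rw [show rep α / 2 + 1/2 + (rep x + 1/2 - rep α / 2) = rep x + 1 by ring,
        coe_add_one, coe_rep]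
    · refine ⟨rep x - rep α / 2 - 1/2, ⟨by linarith, by linarith⟩, ?_⟩
      dsimp only
      rw [show rep α / 2 + 1/2 + (rep x - rep α / 2 - 1/2) = rep x by ring, coe_rep]

lemma mem_openArcR_iff (x : 𝕋) :
    x ∈ openArcR α ↔ rep x < rep α / 2 ∨ rep α / 2 + 1/2 < rep x := by
  have ha0 := rep_nonneg α; have ha1 := rep_lt_one α
  have hx0 := rep_nonneg x; have hx1 := rep_lt_one x
  constructor
  · rintro ⟨t, ht, rfl⟩
    dsimp only at *
    rcases lt_or_ge (rep α / 2 + 1/2 + t) 1 with h | h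
    · rw [rep_coe_of_mem _ (by linarith [ht.1]) h]
      right; linarith [ht.1]
    · rw [show ((rep α / 2 + 1/2 + t : ℝ) : 𝕋)
          = ((rep α / 2 + 1/2 + t - 1 : ℝ) : 𝕋) from (coe_sub_one _).symm,
        rep_coe_of_mem _ (by linarith) (by linarith [ht.2])]
      left; linarith [ht.2]
  · rintro (h | h)
    · refine ⟨rep x + 1/2 - rep α / 2, ⟨by linarith, by linarith⟩, ?_⟩
      dsimp only
      rw [show rep α / 2 + 1/2 + (rep x + 1/2 - rep α / 2) = rep x + 1 by ring,
        coe_add_one, coe_rep]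
    · refine ⟨rep x - rep α / 2 - 1/2, ⟨by linarith, by linarith⟩, ?_⟩
      dsimp only
      rw [show rep α / 2 + 1/2 + (rep x - rep α / 2 - 1/2) = rep x by ring, coe_rep]

lemma tldL_eq (x : 𝕋) :
    tldL α x = if rep α < rep x then ((rep x / 2 : ℝ) : 𝕋)
      else ((rep x / 2 + 1/2 : ℝ) : 𝕋) := by
  have hx0 := rep_nonneg x; have hx1 := rep_lt_one x
  have ha0 := rep_nonneg α; have ha1 := rep_lt_one α
  have hrep : rep ((rep x / 2 : ℝ) : 𝕋) = rep x / 2 :=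
    rep_coe_of_mem _ (by linarith) (by linarith)
  have hcond : (((rep x / 2 : ℝ) : 𝕋) ∈ openArcL α) ↔ rep α < rep x := by
    rw [mem_openArcL_iff, hrep]
    constructor
    · rintro ⟨h1, _⟩; linarith
    · intro h; constructor <;> linarith
  rw [tldL]
  by_cases h : rep α < rep x
  · rw [if_pos (hcond.2 h), if_pos h]
  · rw [if_neg (fun hh => h (hcond.1 hh)), if_neg h]

lemma tldR_eq (x : 𝕋) :
    tldR α x = if rep x < rep α then ((rep x / 2 : ℝ) : 𝕋)
      else ((rep x / 2 + 1/2 : ℝ) : 𝕋) := by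
  have hx0 := rep_nonneg x; have hx1 := rep_lt_one x
  have ha0 := rep_nonneg α; have ha1 := rep_lt_one α
  have hrep : rep ((rep x / 2 : ℝ) : 𝕋) = rep x / 2 :=
    rep_coe_of_mem _ (by linarith) (by linarith)
  have hcond : (((rep x / 2 : ℝ) : 𝕋) ∈ openArcR α) ↔ rep x < rep α := by
    rw [mem_openArcR_iff, hrep]
    constructor
    · rintro (h1 | h1)
      · linarith
      · linarith
    · intro h; left; linarith
  rw [tldR]
  by_cases h : rep x < rep α
  · rw [if_pos (hcond.2 h), if_pos h]
  · rw [if_neg (fun hh => h (hcond.1 hh)), if_neg h]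

lemma rep_tldL_of_gt {x : 𝕋} (h : rep α < rep x) : rep (tldL α x) = rep x / 2 := by
  have hx0 := rep_nonneg x; have hx1 := rep_lt_one x
  rw [tldL_eq, if_pos h, rep_coe_of_mem _ (by linarith) (by linarith)]

lemma rep_tldL_of_le {x : 𝕋} (h : rep x ≤ rep α) : rep (tldL α x) = rep x / 2 + 1/2 := by
  have hx0 := rep_nonneg x; have hx1 := rep_lt_one x
  rw [tldL_eq, if_neg (not_lt.2 h), rep_coe_of_mem _ (by linarith) (by linarith)]

lemma rep_tldR_of_lt {x : 𝕋} (h : rep x < rep α) : rep (tldR α x) = rep x / 2 := by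
  have hx0 := rep_nonneg x; have hx1 := rep_lt_one x
  rw [tldR_eq, if_pos h, rep_coe_of_mem _ (by linarith) (by linarith)]

lemma rep_tldR_of_ge {x : 𝕋} (h : rep α ≤ rep x) : rep (tldR α x) = rep x / 2 + 1/2 := by
  have hx0 := rep_nonneg x; have hx1 := rep_lt_one x
  rw [tldR_eq, if_neg (not_lt.2 h), rep_coe_of_mem _ (by linarith) (by linarith)]

lemma dbl_tldB (b : Bool) (x : 𝕋) : dbl (tldB α b x) = x := by
  cases b <;> simp only [tldB, if_true, if_false, Bool.false_eq_true]
  · rw [tldR_eq]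
    split_ifs <;> rw [dbl_coe] <;>
      [skip; rw [show 2 * (rep x / 2 + 1/2) = rep x + 1 by ring, coe_add_one]] <;>
      [rw [show 2 * (rep x / 2) = rep x by ring, coe_rep]; rw [coe_rep]]
  · rw [tldL_eq]
    split_ifs <;> rw [dbl_coe] <;>
      [skip; rw [show 2 * (rep x / 2 + 1/2) = rep x + 1 by ring, coe_add_one]] <;>
      [rw [show 2 * (rep x / 2) = rep x by ring, coe_rep]; rw [coe_rep]]

end PtApi
end St12
namespace St12
open Real Set

/-- letter of a Bool -/
def letterOf (b : Bool) : Letter := if b then Letter.L else Letter.R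

def arcB (α : 𝕋) (b : Bool) : Set 𝕋 := if b then arcL α else arcR α
def openArcB (α : 𝕋) (b : Bool) : Set 𝕋 := if b then openArcL α else openArcR α

lemma semi_letterOf (α : 𝕋) (b : Bool) : semi α (letterOf b) = arcB α b := by
  cases b <;> rfl

section NP
variable {α : 𝕋}

lemma rep_zero : rep (0 : 𝕋) = 0 := by
  rw [show (0 : 𝕋) = ((0 : ℝ) : 𝕋) by norm_cast, rep_coe_of_mem] <;> norm_num

lemma alpha_ne_zero (hα : ¬ Periodic' α) : α ≠ 0 := by
  rintro rfl
  exact hα ⟨1, le_refl 1, by simp [dbl]⟩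

lemma repα_pos (hα : ¬ Periodic' α) : 0 < rep α := by
  rcases (rep_nonneg α).lt_or_eq with h | h
  · exact h
  · exact absurd (by rw [← coe_rep α, ← h]; norm_cast) (alpha_ne_zero hα)

lemma rep_star1 : rep (star1 α) = rep α / 2 := by
  have h0 := rep_nonneg α; have h1 := rep_lt_one α
  rw [star1, rep_coe_of_mem _ (by linarith) (by linarith)]

lemma rep_star2 : rep (star2 α) = rep α / 2 + 1/2 := by
  have h0 := rep_nonneg α; have h1 := rep_lt_one α
  rw [star2, rep_coe_of_mem _ (by linarith) (by linarith)]

lemma dbl_star1 : dbl (star1 α) = α := by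
  rw [star1, dbl_coe, show 2 * (rep α / 2) = rep α by ring, coe_rep]

lemma dbl_star2 : dbl (star2 α) = α := by
  rw [star2, dbl_coe, show 2 * (rep α / 2 + 1/2) = rep α + 1 by ring, coe_add_one, coe_rep]

lemma star1_ne_star2 : star1 α ≠ star2 α := by
  intro h
  have := congrArg rep h
  rw [rep_star1, rep_star2] at this
  linarith

lemma star1_ne_alpha (hα : ¬ Periodic' α) : star1 α ≠ α := by
  intro h
  have := congrArg rep h
  rw [rep_star1] at this
  have : rep α = 0 := by linarith
  exact alpha_ne_zero hα (by rw [← coe_rep α, this]; norm_cast)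

lemma star2_ne_alpha : star2 α ≠ α := by
  intro h
  have := congrArg rep h
  rw [rep_star2] at this
  have h1 := rep_lt_one α
  linarith

/-- `IsStar s` : s is one of the two stars. -/
def IsStar (α s : 𝕋) : Prop := s = star1 α ∨ s = star2 α

lemma IsStar.dbl_eq {s : 𝕋} (h : IsStar α s) : dbl s = α := by
  rcases h with rfl | rfl
  exacts [dbl_star1, dbl_star2]

lemma IsStar.ne_alpha {s : 𝕋} (hα : ¬ Periodic' α) (h : IsStar α s) : s ≠ α := by
  rcases h with rfl | rfl
  exacts [star1_ne_alpha hα, star2_ne_alpha]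

lemma wtld_cons (b : Bool) (g : List Bool) (x : 𝕋) :
    wtld α (b :: g) x = tldB α b (wtld α g x) := rfl

lemma dbl_iter_wtld (g : List Bool) (x : 𝕋) : dbl^[g.length] (wtld α g x) = x := by
  induction g with
  | nil => rfl
  | cons b g ih =>
      rw [wtld_cons, List.length_cons, Function.iterate_succ_apply, dbl_tldB, ih]

lemma dbl_iter_wtld_drop (g : List Bool) (x : 𝕋) (k : ℕ) (hk : k ≤ g.length) :
    dbl^[k] (wtld α g x) = wtld α (g.drop k) x := by
  induction g generalizing k with
  | nil => simp at hk; simp [hk]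
  | cons b g ih =>
      cases k with
      | zero => simp
      | succ k =>
          rw [wtld_cons, Function.iterate_succ_apply, dbl_tldB, List.drop_succ_cons]
          exact ih k (by simpa using hk)

lemma wtld_ne_alpha (hα : ¬ Periodic' α) (g : List Bool) {s : 𝕋} (hs : IsStar α s) :
    wtld α g s ≠ α := by
  intro h
  apply hα
  refine ⟨g.length + 1, by omega, ?_⟩
  have h1 : dbl^[g.length] α = s := by
    conv_lhs => rw [← h]
    exact dbl_iter_wtld g s
  rw [Function.iterate_succ_apply', h1, hs.dbl_eq]

lemma tldL_mem_openArcL {y : 𝕋} (hy : y ≠ α) : tldL α y ∈ openArcL α := by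
  have hy0 := rep_nonneg y; have hy1 := rep_lt_one y
  have ha0 := rep_nonneg α; have ha1 := rep_lt_one α
  have hne : rep y ≠ rep α := fun h => hy (rep_injective h)
  rw [mem_openArcL_iff]
  rcases lt_or_ge (rep α) (rep y) with h | h
  · rw [rep_tldL_of_gt α h]; constructor <;> linarith
  · have h' : rep y < rep α := lt_of_le_of_ne h hne
    rw [rep_tldL_of_le α h]; constructor <;> linarith

lemma tldR_mem_openArcR {y : 𝕋} (hy : y ≠ α) : tldR α y ∈ openArcR α := by
  have hy0 := rep_nonneg y; have hy1 := rep_lt_one y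
  have ha0 := rep_nonneg α; have ha1 := rep_lt_one α
  have hne : rep y ≠ rep α := fun h => hy (rep_injective h)
  rw [mem_openArcR_iff]
  rcases lt_or_ge (rep y) (rep α) with h | h
  · rw [rep_tldR_of_lt α h]; left; linarith
  · have h' : rep α < rep y := lt_of_le_of_ne h (Ne.symm hne)
    rw [rep_tldR_of_ge α h]; right; linarith

lemma tldB_mem_openArcB (b : Bool) {y : 𝕋} (hy : y ≠ α) : tldB α b y ∈ openArcB α b := by
  cases b
  · exact tldR_mem_openArcR hy
  · exact tldL_mem_openArcL hy

lemma digit_mem (hα : ¬ Periodic' α) (g : List Bool) {s : 𝕋} (hs : IsStar α s)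
    (i : ℕ) (hi : i < g.length) :
    dbl^[i] (wtld α g s) ∈ openArcB α (g.getD i true) := by
  rw [dbl_iter_wtld_drop g s i (le_of_lt hi),
    List.drop_eq_getElem_cons hi, wtld_cons]
  rw [List.getD_eq_getElem g true hi]
  exact tldB_mem_openArcB _ (wtld_ne_alpha hα _ hs)

end NP
end St12
namespace St12
open Real Set

lemma iff_pospair {P Q X : ℝ} (h : 0 < P * Q) : (0 ≤ P * X ↔ 0 ≤ Q * X) := by
  rcases lt_trichotomy P 0 with hP | hP | hP
  · have hQ : Q < 0 := by nlinarith
    constructor <;> intro hx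
    · have hX : X ≤ 0 := by nlinarith
      nlinarith
    · have hX : X ≤ 0 := by nlinarith
      nlinarith
  · exfalso; rw [hP] at h; nlinarith
  · have hQ : 0 < Q := by nlinarith
    constructor <;> intro hx
    · have hX : 0 ≤ X := by nlinarith
      positivity
    · have hX : 0 ≤ X := by nlinarith
      positivity

lemma iff_posmul {P X Y : ℝ} (h : 0 < X * Y) : (0 ≤ P * X ↔ 0 ≤ P * Y) := by
  have h1 : (0 ≤ X * P ↔ 0 ≤ Y * P) := iff_pospair h
  rw [mul_comm X P, mul_comm Y P] at h1; exact h1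

lemma iff_pos4 {P Q : ℝ} (h : 0 < P * Q) : (0 ≤ P ↔ 0 ≤ Q) := by
  have := iff_pospair (X := 1) h
  simpa using this

/-- circular cut: points below `c` are shifted up by one turn. -/
noncomputable def gcut (c t : ℝ) : ℝ := if t < c then t + 1 else t

lemma quad_inv (c : ℝ) {u v p q : ℝ}
    (hu0 : 0 ≤ u) (hu1 : u < 1) (hv0 : 0 ≤ v) (hv1 : v < 1)
    (hp0 : 0 ≤ p) (hp1 : p < 1) (hq0 : 0 ≤ q) (hq1 : q < 1) :
    (0 ≤ (gcut c u - gcut c p) * (gcut c u - gcut c q) *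
        ((gcut c v - gcut c p) * (gcut c v - gcut c q)) ↔
      0 ≤ (u - p) * (u - q) * ((v - p) * (v - q))) := by
  simp only [gcut]
  rcases lt_or_ge u c with hu | hu <;> rcases lt_or_ge p c with hp | hp <;>
    rcases lt_or_ge q c with hq | hq <;> rcases lt_or_ge v c with hv | hv
  -- 1 TTTT
  · rw [if_pos hu, if_pos hp, if_pos hq, if_pos hv,
      show u + 1 - (p + 1) = u - p by ring, show u + 1 - (q + 1) = u - q by ring,
      show v + 1 - (p + 1) = v - p by ring, show v + 1 - (q + 1) = v - q by ring]
  -- 2 TTTF : flips C,D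
  · rw [if_pos hu, if_pos hp, if_pos hq, if_neg (not_lt.2 hv),
      show u + 1 - (p + 1) = u - p by ring, show u + 1 - (q + 1) = u - q by ring]
    have hC : (v - (p + 1)) * (v - p) < 0 :=
      mul_neg_of_neg_of_pos (by linarith) (by linarith)
    have hD : (v - (q + 1)) * (v - q) < 0 :=
      mul_neg_of_neg_of_pos (by linarith) (by linarith)
    exact iff_posmul (lt_of_lt_of_eq (mul_pos_of_neg_of_neg hC hD) (by ring))
  -- 3 TTFT : flips B,D
  · rw [if_pos hu, if_pos hp, if_neg (not_lt.2 hq), if_pos hv,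
      show u + 1 - (p + 1) = u - p by ring, show v + 1 - (p + 1) = v - p by ring]
    have hB : (u + 1 - q) * (u - q) < 0 :=
      mul_neg_of_pos_of_neg (by linarith) (by linarith)
    have hD : (v + 1 - q) * (v - q) < 0 :=
      mul_neg_of_pos_of_neg (by linarith) (by linarith)
    rw [show (u - p) * (u + 1 - q) * ((v - p) * (v + 1 - q))
        = ((u + 1 - q) * (v + 1 - q)) * ((u - p) * (v - p)) by ring,
      show (u - p) * (u - q) * ((v - p) * (v - q))
        = ((u - q) * (v - q)) * ((u - p) * (v - p)) by ring]
    exact iff_pospair (lt_of_lt_of_eq (mul_pos_of_neg_of_neg hB hD) (by ring))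
  -- 4 TTFF : flips B,C
  · rw [if_pos hu, if_pos hp, if_neg (not_lt.2 hq), if_neg (not_lt.2 hv),
      show u + 1 - (p + 1) = u - p by ring]
    have hB : (u + 1 - q) * (u - q) < 0 :=
      mul_neg_of_pos_of_neg (by linarith) (by linarith)
    have hC : (v - (p + 1)) * (v - p) < 0 :=
      mul_neg_of_neg_of_pos (by linarith) (by linarith)
    rw [show (u - p) * (u + 1 - q) * ((v - (p + 1)) * (v - q))
        = ((u + 1 - q) * (v - (p + 1))) * ((u - p) * (v - q)) by ring,
      show (u - p) * (u - q) * ((v - p) * (v - q))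
        = ((u - q) * (v - p)) * ((u - p) * (v - q)) by ring]
    exact iff_pospair (lt_of_lt_of_eq (mul_pos_of_neg_of_neg hB hC) (by ring))
  -- 5 TFTT : flips A,C
  · rw [if_pos hu, if_neg (not_lt.2 hp), if_pos hq, if_pos hv,
      show u + 1 - (q + 1) = u - q by ring, show v + 1 - (q + 1) = v - q by ring]
    have hA : (u + 1 - p) * (u - p) < 0 :=
      mul_neg_of_pos_of_neg (by linarith) (by linarith)
    have hC : (v + 1 - p) * (v - p) < 0 :=
      mul_neg_of_pos_of_neg (by linarith) (by linarith)
    rw [show (u + 1 - p) * (u - q) * ((v + 1 - p) * (v - q))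
        = ((u + 1 - p) * (v + 1 - p)) * ((u - q) * (v - q)) by ring,
      show (u - p) * (u - q) * ((v - p) * (v - q))
        = ((u - p) * (v - p)) * ((u - q) * (v - q)) by ring]
    exact iff_pospair (lt_of_lt_of_eq (mul_pos_of_neg_of_neg hA hC) (by ring))
  -- 6 TFTF : flips A,D
  · rw [if_pos hu, if_neg (not_lt.2 hp), if_pos hq, if_neg (not_lt.2 hv),
      show u + 1 - (q + 1) = u - q by ring]
    have hA : (u + 1 - p) * (u - p) < 0 :=
      mul_neg_of_pos_of_neg (by linarith) (by linarith)
    have hD : (v - (q + 1)) * (v - q) < 0 :=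
      mul_neg_of_neg_of_pos (by linarith) (by linarith)
    rw [show (u + 1 - p) * (u - q) * ((v - p) * (v - (q + 1)))
        = ((u + 1 - p) * (v - (q + 1))) * ((u - q) * (v - p)) by ring,
      show (u - p) * (u - q) * ((v - p) * (v - q))
        = ((u - p) * (v - q)) * ((u - q) * (v - p)) by ring]
    exact iff_pospair (lt_of_lt_of_eq (mul_pos_of_neg_of_neg hA hD) (by ring))
  -- 7 TFFT : flips A,B,C,D
  · rw [if_pos hu, if_neg (not_lt.2 hp), if_neg (not_lt.2 hq), if_pos hv]
    have hA : (u + 1 - p) * (u - p) < 0 :=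
      mul_neg_of_pos_of_neg (by linarith) (by linarith)
    have hB : (u + 1 - q) * (u - q) < 0 :=
      mul_neg_of_pos_of_neg (by linarith) (by linarith)
    have hC : (v + 1 - p) * (v - p) < 0 :=
      mul_neg_of_pos_of_neg (by linarith) (by linarith)
    have hD : (v + 1 - q) * (v - q) < 0 :=
      mul_neg_of_pos_of_neg (by linarith) (by linarith)
    exact iff_pos4 (lt_of_lt_of_eq (mul_pos (mul_pos_of_neg_of_neg hA hB) (mul_pos_of_neg_of_neg hC hD)) (by ring))
  -- 8 TFFF : flips A,B
  · rw [if_pos hu, if_neg (not_lt.2 hp), if_neg (not_lt.2 hq), if_neg (not_lt.2 hv)]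
    have hA : (u + 1 - p) * (u - p) < 0 :=
      mul_neg_of_pos_of_neg (by linarith) (by linarith)
    have hB : (u + 1 - q) * (u - q) < 0 :=
      mul_neg_of_pos_of_neg (by linarith) (by linarith)
    exact iff_pospair (lt_of_lt_of_eq (mul_pos_of_neg_of_neg hA hB) (by ring))
  -- 9 FTTT : flips A,B
  · rw [if_neg (not_lt.2 hu), if_pos hp, if_pos hq, if_pos hv,
      show v + 1 - (p + 1) = v - p by ring, show v + 1 - (q + 1) = v - q by ring]
    have hA : (u - (p + 1)) * (u - p) < 0 :=
      mul_neg_of_neg_of_pos (by linarith) (by linarith)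
    have hB : (u - (q + 1)) * (u - q) < 0 :=
      mul_neg_of_neg_of_pos (by linarith) (by linarith)
    exact iff_pospair (lt_of_lt_of_eq (mul_pos_of_neg_of_neg hA hB) (by ring))
  -- 10 FTTF : flips A,B,C,D
  · rw [if_neg (not_lt.2 hu), if_pos hp, if_pos hq, if_neg (not_lt.2 hv)]
    have hA : (u - (p + 1)) * (u - p) < 0 :=
      mul_neg_of_neg_of_pos (by linarith) (by linarith)
    have hB : (u - (q + 1)) * (u - q) < 0 :=
      mul_neg_of_neg_of_pos (by linarith) (by linarith)
    have hC : (v - (p + 1)) * (v - p) < 0 :=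
      mul_neg_of_neg_of_pos (by linarith) (by linarith)
    have hD : (v - (q + 1)) * (v - q) < 0 :=
      mul_neg_of_neg_of_pos (by linarith) (by linarith)
    exact iff_pos4 (lt_of_lt_of_eq (mul_pos (mul_pos_of_neg_of_neg hA hB) (mul_pos_of_neg_of_neg hC hD)) (by ring))
  -- 11 FTFT : flips A,D
  · rw [if_neg (not_lt.2 hu), if_pos hp, if_neg (not_lt.2 hq), if_pos hv,
      show v + 1 - (p + 1) = v - p by ring]
    have hA : (u - (p + 1)) * (u - p) < 0 :=
      mul_neg_of_neg_of_pos (by linarith) (by linarith)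
    have hD : (v + 1 - q) * (v - q) < 0 :=
      mul_neg_of_pos_of_neg (by linarith) (by linarith)
    rw [show (u - (p + 1)) * (u - q) * ((v - p) * (v + 1 - q))
        = ((u - (p + 1)) * (v + 1 - q)) * ((u - q) * (v - p)) by ring,
      show (u - p) * (u - q) * ((v - p) * (v - q))
        = ((u - p) * (v - q)) * ((u - q) * (v - p)) by ring]
    exact iff_pospair (lt_of_lt_of_eq (mul_pos_of_neg_of_neg hA hD) (by ring))
  -- 12 FTFF : flips A,C
  · rw [if_neg (not_lt.2 hu), if_pos hp, if_neg (not_lt.2 hq), if_neg (not_lt.2 hv)]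
    have hA : (u - (p + 1)) * (u - p) < 0 :=
      mul_neg_of_neg_of_pos (by linarith) (by linarith)
    have hC : (v - (p + 1)) * (v - p) < 0 :=
      mul_neg_of_neg_of_pos (by linarith) (by linarith)
    rw [show (u - (p + 1)) * (u - q) * ((v - (p + 1)) * (v - q))
        = ((u - (p + 1)) * (v - (p + 1))) * ((u - q) * (v - q)) by ring,
      show (u - p) * (u - q) * ((v - p) * (v - q))
        = ((u - p) * (v - p)) * ((u - q) * (v - q)) by ring]
    exact iff_pospair (lt_of_lt_of_eq (mul_pos_of_neg_of_neg hA hC) (by ring))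
  -- 13 FFTT : flips B,C
  · rw [if_neg (not_lt.2 hu), if_neg (not_lt.2 hp), if_pos hq, if_pos hv,
      show v + 1 - (q + 1) = v - q by ring]
    have hB : (u - (q + 1)) * (u - q) < 0 :=
      mul_neg_of_neg_of_pos (by linarith) (by linarith)
    have hC : (v + 1 - p) * (v - p) < 0 :=
      mul_neg_of_pos_of_neg (by linarith) (by linarith)
    rw [show (u - p) * (u - (q + 1)) * ((v + 1 - p) * (v - q))
        = ((u - (q + 1)) * (v + 1 - p)) * ((u - p) * (v - q)) by ring,
      show (u - p) * (u - q) * ((v - p) * (v - q))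
        = ((u - q) * (v - p)) * ((u - p) * (v - q)) by ring]
    exact iff_pospair (lt_of_lt_of_eq (mul_pos_of_neg_of_neg hB hC) (by ring))
  -- 14 FFTF : flips B,D
  · rw [if_neg (not_lt.2 hu), if_neg (not_lt.2 hp), if_pos hq, if_neg (not_lt.2 hv)]
    have hB : (u - (q + 1)) * (u - q) < 0 :=
      mul_neg_of_neg_of_pos (by linarith) (by linarith)
    have hD : (v - (q + 1)) * (v - q) < 0 :=
      mul_neg_of_neg_of_pos (by linarith) (by linarith)
    rw [show (u - p) * (u - (q + 1)) * ((v - p) * (v - (q + 1)))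
        = ((u - (q + 1)) * (v - (q + 1))) * ((u - p) * (v - p)) by ring,
      show (u - p) * (u - q) * ((v - p) * (v - q))
        = ((u - q) * (v - q)) * ((u - p) * (v - p)) by ring]
    exact iff_pospair (lt_of_lt_of_eq (mul_pos_of_neg_of_neg hB hD) (by ring))
  -- 15 FFFT : flips C,D
  · rw [if_neg (not_lt.2 hu), if_neg (not_lt.2 hp), if_neg (not_lt.2 hq), if_pos hv]
    have hC : (v + 1 - p) * (v - p) < 0 :=
      mul_neg_of_pos_of_neg (by linarith) (by linarith)
    have hD : (v + 1 - q) * (v - q) < 0 :=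
      mul_neg_of_pos_of_neg (by linarith) (by linarith)
    exact iff_posmul (lt_of_lt_of_eq (mul_pos_of_neg_of_neg hC hD) (by ring))
  -- 16 FFFF
  · rw [if_neg (not_lt.2 hu), if_neg (not_lt.2 hp), if_neg (not_lt.2 hq),
      if_neg (not_lt.2 hv)]

end St12
namespace St12
open Real Set

lemma iff_posleft {P X : ℝ} (h : 0 < P) : (0 ≤ P * X ↔ 0 ≤ X) := by
  constructor <;> intro hx
  · nlinarith
  · positivity

lemma iff_posright {X P : ℝ} (h : 0 < P) : (0 ≤ X * P ↔ 0 ≤ X) := by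
  rw [mul_comm]; exact iff_posleft h

/-- side predicate : `x` is weakly on the same side of the chord `PQ` as `w`. -/
def SideOK (P Q w x : 𝕋) : Prop :=
  0 ≤ (rep x - rep P) * (rep x - rep Q) * ((rep w - rep P) * (rep w - rep Q))

lemma SideOK_comm {P Q w x : 𝕋} : SideOK P Q w x ↔ SideOK P Q x w := by
  unfold SideOK; rw [mul_comm]

noncomputable def Gc (α x : 𝕋) : ℝ := gcut (rep α / 2) (rep x)
noncomputable def Hc (α x : 𝕋) : ℝ := gcut (rep α) (rep x)

lemma rep_dbl_lt {x : 𝕋} (h : rep x < 1/2) : rep (dbl x) = 2 * rep x := by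
  rw [dbl_eq, rep_coe_of_mem _ (by linarith [rep_nonneg x]) (by linarith)]

lemma rep_dbl_ge {x : 𝕋} (h : 1/2 ≤ rep x) : rep (dbl x) = 2 * rep x - 1 := by
  rw [dbl_eq, ← coe_sub_one,
    rep_coe_of_mem _ (by linarith) (by linarith [rep_lt_one x])]

lemma Hc_range {α x : 𝕋} (h : x ≠ α) : rep α < Hc α x ∧ Hc α x < rep α + 1 := by
  have hne : rep x ≠ rep α := fun hh => h (rep_injective hh)
  have h0 := rep_nonneg x; have h1 := rep_lt_one x
  have ha0 := rep_nonneg α; have ha1 := rep_lt_one α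
  unfold Hc gcut
  split_ifs with hlt
  · constructor <;> linarith
  · have : rep α < rep x := lt_of_le_of_ne (not_lt.1 hlt) (Ne.symm hne)
    constructor <;> linarith

lemma Gc_tldB {α : 𝕋} (c : Bool) {x : 𝕋} (h : x ≠ α) :
    Gc α (tldB α c x) = Hc α x / 2 + (if c then 0 else 1/2) := by
  have hne : rep x ≠ rep α := fun hh => h (rep_injective hh)
  have h0 := rep_nonneg x; have h1 := rep_lt_one x
  have ha0 := rep_nonneg α; have ha1 := rep_lt_one α
  rcases lt_or_ge (rep x) (rep α) with hlt | hge
  · cases c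
    · -- R, rep x < rep α : image rx/2, G shifts by 1 ; H = rx + 1
      show Gc α (tldR α x) = Hc α x / 2 + (1/2 : ℝ)
      rw [Gc, rep_tldR_of_lt α hlt, gcut,
        if_pos (by linarith : rep x / 2 < rep α / 2), Hc, gcut, if_pos hlt]
      try ring
    · show Gc α (tldL α x) = Hc α x / 2 + (0 : ℝ)
      rw [Gc, rep_tldL_of_le α (le_of_lt hlt), gcut,
        if_neg (by push_neg; linarith : ¬ rep x / 2 + 1/2 < rep α / 2), Hc, gcut, if_pos hlt]
      try ring
  · have hgt : rep α < rep x := lt_of_le_of_ne hge (Ne.symm hne)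
    cases c
    · show Gc α (tldR α x) = Hc α x / 2 + (1/2 : ℝ)
      rw [Gc, rep_tldR_of_ge α hge, gcut,
        if_neg (by push_neg; linarith : ¬ rep x / 2 + 1/2 < rep α / 2), Hc, gcut, if_neg (not_lt.2 hge)]
      try ring
    · show Gc α (tldL α x) = Hc α x / 2 + (0 : ℝ)
      rw [Gc, rep_tldL_of_gt α hgt, gcut,
        if_neg (by push_neg; linarith : ¬ rep x / 2 < rep α / 2), Hc, gcut, if_neg (not_lt.2 hge)]
      try ring

lemma tldB_dbl {α : 𝕋} (c : Bool) {x : 𝕋} (hx : x ∈ openArcB α c) :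
    tldB α c (dbl x) = x := by
  have h0 := rep_nonneg x; have h1 := rep_lt_one x
  have ha0 := rep_nonneg α; have ha1 := rep_lt_one α
  cases c
  · rw [show openArcB α false = openArcR α from rfl, mem_openArcR_iff] at hx
    show tldR α (dbl x) = x
    rcases hx with hx | hx
    · have hd : rep (dbl x) = 2 * rep x := rep_dbl_lt (by linarith)
      rw [tldR_eq, if_pos (by rw [hd]; linarith), hd,
        show 2 * rep x / 2 = rep x by ring, coe_rep]
    · have hd : rep (dbl x) = 2 * rep x - 1 := rep_dbl_ge (by linarith)
      rw [tldR_eq, if_neg (by rw [hd]; push_neg; linarith), hd,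
        show (2 * rep x - 1) / 2 + 1/2 = rep x by ring, coe_rep]
  · rw [show openArcB α true = openArcL α from rfl, mem_openArcL_iff] at hx
    show tldL α (dbl x) = x
    rcases lt_or_ge (rep x) (1/2) with hhalf | hhalf
    · have hd : rep (dbl x) = 2 * rep x := rep_dbl_lt hhalf
      rw [tldL_eq, if_pos (by rw [hd]; linarith [hx.1]), hd,
        show 2 * rep x / 2 = rep x by ring, coe_rep]
    · have hd : rep (dbl x) = 2 * rep x - 1 := rep_dbl_ge hhalf
      rw [tldL_eq, if_neg (by rw [hd]; push_neg; linarith [hx.2]), hd,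
        show (2 * rep x - 1) / 2 + 1/2 = rep x by ring, coe_rep]

lemma dbl_ne_alpha {α : 𝕋} (c : Bool) {x : 𝕋} (hx : x ∈ openArcB α c) :
    dbl x ≠ α := by
  have h0 := rep_nonneg x; have h1 := rep_lt_one x
  have ha0 := rep_nonneg α; have ha1 := rep_lt_one α
  intro h
  have hra : rep (dbl x) = rep α := by rw [h]
  cases c
  · rw [show openArcB α false = openArcR α from rfl, mem_openArcR_iff] at hx
    rcases hx with hx | hx
    · rw [rep_dbl_lt (by linarith)] at hra; linarith
    · rw [rep_dbl_ge (by linarith)] at hra; linarith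
  · rw [show openArcB α true = openArcL α from rfl, mem_openArcL_iff] at hx
    rcases lt_or_ge (rep x) (1/2) with hhalf | hhalf
    · rw [rep_dbl_lt hhalf] at hra; linarith [hx.1]
    · rw [rep_dbl_ge hhalf] at hra; linarith [hx.2]

lemma Gc_out_lb {α x : 𝕋} (c : Bool) (hx : x ∉ openArcB α c) {P : 𝕋} (hP : P ≠ α) :
    (c = true → (Gc α x ≤ rep α / 2 ∨ rep α / 2 + 1/2 ≤ Gc α x)) ∧
    (c = false → rep α / 2 ≤ Gc α x ∧ Gc α x ≤ rep α / 2 + 1/2) := by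
  have h0 := rep_nonneg x; have h1 := rep_lt_one x
  have ha0 := rep_nonneg α; have ha1 := rep_lt_one α
  constructor
  · rintro rfl
    rw [show openArcB α true = openArcL α from rfl, mem_openArcL_iff] at hx
    push_neg at hx
    unfold Gc gcut
    split_ifs with hlt
    · right; linarith
    · rcases le_or_gt (rep x) (rep α / 2) with h | h
      · left; linarith
      · right; linarith [hx h]
  · rintro rfl
    rw [show openArcB α false = openArcR α from rfl, mem_openArcR_iff] at hx
    push_neg at hx
    unfold Gc gcut
    split_ifs with hlt
    · exact absurd hlt (not_lt.2 (by linarith [hx.1, hx.2]))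
    · exact ⟨hx.1, hx.2⟩

/-- outside point : the pair-product against both tilde images is strictly positive. -/
lemma pair_pos_out {α : 𝕋} (c : Bool) {x P Q : 𝕋} (hx : x ∉ openArcB α c)
    (hP : P ≠ α) (hQ : Q ≠ α) :
    0 < (Gc α x - Gc α (tldB α c P)) * (Gc α x - Gc α (tldB α c Q)) := by
  have ha0 := rep_nonneg α; have ha1 := rep_lt_one α
  have hPr := Hc_range hP; have hQr := Hc_range hQ
  cases c
  · have hb := (Gc_out_lb false hx hP).2 rfl
    rw [Gc_tldB false hP, Gc_tldB false hQ, if_neg Bool.false_ne_true]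
    apply mul_pos_of_neg_of_neg <;> nlinarith [hPr.1, hQr.1, hb.1, hb.2]
  · have hb := (Gc_out_lb true hx hP).1 rfl
    rw [Gc_tldB true hP, Gc_tldB true hQ, if_pos rfl]
    rcases hb with hb | hb
    · apply mul_pos_of_neg_of_neg <;> nlinarith [hPr.1, hQr.1, hPr.2, hQr.2]
    · apply mul_pos <;> nlinarith [hPr.1, hQr.1, hPr.2, hQr.2]


lemma quarter_iff (A B C D k : ℝ) :
    (0 ≤ (A/2 + k - (C/2 + k)) * (A/2 + k - (D/2 + k)) *
      ((B/2 + k - (C/2 + k)) * (B/2 + k - (D/2 + k)))) ↔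
    0 ≤ (A - C) * (A - D) * ((B - C) * (B - D)) := by
  rw [show (A/2 + k - (C/2 + k)) * (A/2 + k - (D/2 + k)) *
      ((B/2 + k - (C/2 + k)) * (B/2 + k - (D/2 + k)))
    = (1/16) * ((A - C) * (A - D) * ((B - C) * (B - D))) by ring]
  exact iff_posleft (by norm_num)

lemma quarter_pair_iff (A C D k : ℝ) :
    (0 ≤ (A/2 + k - (C/2 + k)) * (A/2 + k - (D/2 + k))) ↔ 0 ≤ (A - C) * (A - D) := by
  rw [show (A/2 + k - (C/2 + k)) * (A/2 + k - (D/2 + k))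
    = (1/4) * ((A - C) * (A - D)) by ring]
  exact iff_posleft (by norm_num)

lemma sideOK_iff_G (α : 𝕋) (P Q w x : 𝕋) :
    SideOK P Q w x ↔
      0 ≤ (Gc α x - Gc α P) * (Gc α x - Gc α Q) *
        ((Gc α w - Gc α P) * (Gc α w - Gc α Q)) := by
  unfold SideOK Gc
  exact (quad_inv (rep α / 2) (rep_nonneg x) (rep_lt_one x) (rep_nonneg w) (rep_lt_one w)
    (rep_nonneg P) (rep_lt_one P) (rep_nonneg Q) (rep_lt_one Q)).symm

lemma sideOK_iff_H (α : 𝕋) (P Q w x : 𝕋) :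
    SideOK P Q w x ↔
      0 ≤ (Hc α x - Hc α P) * (Hc α x - Hc α Q) *
        ((Hc α w - Hc α P) * (Hc α w - Hc α Q)) := by
  unfold SideOK Hc
  exact (quad_inv (rep α) (rep_nonneg x) (rep_lt_one x) (rep_nonneg w) (rep_lt_one w)
    (rep_nonneg P) (rep_lt_one P) (rep_nonneg Q) (rep_lt_one Q)).symm

lemma Hc_alpha (α : 𝕋) : Hc α α = rep α := by
  unfold Hc gcut; rw [if_neg (lt_irrefl _)]

lemma sideOK_alpha_iff {α P Q : 𝕋} (hP : P ≠ α) (hQ : Q ≠ α) (w : 𝕋) :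
    SideOK P Q w α ↔ 0 ≤ (Hc α w - Hc α P) * (Hc α w - Hc α Q) := by
  rw [sideOK_iff_H α P Q w α, Hc_alpha]
  have hPr := Hc_range hP; have hQr := Hc_range hQ
  have hpos : 0 < (rep α - Hc α P) * (rep α - Hc α Q) :=
    mul_pos_of_neg_of_neg (by linarith [hPr.1]) (by linarith [hQr.1])
  exact iff_posleft hpos

lemma Gc_eq_half {α : 𝕋} (c : Bool) {x : 𝕋} (hx : x ∈ openArcB α c) :
    Gc α x = Hc α (dbl x) / 2 + (if c then 0 else 1/2) := by
  conv_lhs => rw [← tldB_dbl c hx]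
  exact Gc_tldB c (dbl_ne_alpha c hx)

lemma master_in_in {α : 𝕋} (c : Bool) {P Q w x : 𝕋} (hP : P ≠ α) (hQ : Q ≠ α)
    (hx : x ∈ openArcB α c) (hw : w ∈ openArcB α c) :
    (SideOK (tldB α c P) (tldB α c Q) w x ↔ SideOK P Q (dbl w) (dbl x)) := by
  rw [sideOK_iff_G α, Gc_eq_half c hx, Gc_eq_half c hw, Gc_tldB c hP, Gc_tldB c hQ,
    quarter_iff, sideOK_iff_H α P Q (dbl w) (dbl x)]

lemma master_out {α : 𝕋} (c : Bool) {P Q w x : 𝕋} (hP : P ≠ α) (hQ : Q ≠ α)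
    (hx : x ∉ openArcB α c) :
    (SideOK (tldB α c P) (tldB α c Q) w x ↔
      (w ∈ openArcB α c → SideOK P Q (dbl w) α)) := by
  have hpos := pair_pos_out c hx hP hQ
  have h1 : SideOK (tldB α c P) (tldB α c Q) w x ↔
      0 ≤ (Gc α w - Gc α (tldB α c P)) * (Gc α w - Gc α (tldB α c Q)) :=
    (sideOK_iff_G α _ _ w x).trans (iff_posleft hpos)
  by_cases hw : w ∈ openArcB α c
  · rw [h1, Gc_eq_half c hw, Gc_tldB c hP, Gc_tldB c hQ, quarter_pair_iff,
      ← sideOK_alpha_iff hP hQ (dbl w)]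
    simp [hw]
  · have hwpos := pair_pos_out c hw hP hQ
    exact iff_of_true (h1.mpr (le_of_lt hwpos)) (fun h => absurd h hw)

end St12
namespace St12
open Real Set

lemma iff_negright {X P : ℝ} (h : P < 0) : (0 ≤ X * P) ↔ X ≤ 0 := by
  constructor <;> intro hx <;> nlinarith

lemma quad_between {s t X : ℝ} (hst : s < t) :
    ((X - s) * (X - t) ≤ 0) ↔ (s ≤ X ∧ X ≤ t) := by
  constructor
  · intro h
    constructor <;> by_contra hc <;> push_neg at hc <;> nlinarith
  · rintro ⟨h1, h2⟩; nlinarith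

lemma quad_outside {s t X : ℝ} (hst : s < t) :
    (0 ≤ (X - s) * (X - t)) ↔ (X ≤ s ∨ t ≤ X) := by
  constructor
  · intro h
    by_contra hc; push_neg at hc
    nlinarith [hc.1, hc.2]
  · rintro (h | h) <;> nlinarith

section Arcs
variable {α : 𝕋}

lemma star_not_mem_openArcB {s : 𝕋} (hs : IsStar α s) (c : Bool) :
    s ∉ openArcB α c := by
  have ha0 := rep_nonneg α; have ha1 := rep_lt_one α
  have hrs : rep s = rep α / 2 ∨ rep s = rep α / 2 + 1/2 := by
    rcases hs with rfl | rfl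
    · left; exact rep_star1
    · right; exact rep_star2
  cases c <;> intro hmem
  · rw [show openArcB α false = openArcR α from rfl, mem_openArcR_iff] at hmem
    rcases hrs with h | h <;> rcases hmem with hm | hm <;> linarith
  · rw [show openArcB α true = openArcL α from rfl, mem_openArcL_iff] at hmem
    rcases hrs with h | h <;> [linarith [hmem.1]; linarith [hmem.2]]

lemma openArc_trichotomy (x : 𝕋) :
    x ∈ openArcB α true ∨ x ∈ openArcB α false ∨ IsStar α x := by
  have ha0 := rep_nonneg α; have ha1 := rep_lt_one α
  have hx0 := rep_nonneg x; have hx1 := rep_lt_one x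
  rcases lt_trichotomy (rep x) (rep α / 2) with h | h | h
  · right; left
    rw [show openArcB α false = openArcR α from rfl, mem_openArcR_iff]; left; exact h
  · right; right; left
    apply rep_injective; rw [rep_star1, h]
  · rcases lt_trichotomy (rep x) (rep α / 2 + 1/2) with h2 | h2 | h2
    · left
      rw [show openArcB α true = openArcL α from rfl, mem_openArcL_iff]
      exact ⟨h, h2⟩
    · right; right; right
      apply rep_injective; rw [rep_star2, h2]
    · right; left
      rw [show openArcB α false = openArcR α from rfl, mem_openArcR_iff]; right; exact h2

lemma openArcB_not_mem_arcB {x : 𝕋} {b : Bool} (h : x ∈ openArcB α (!b)) :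
    x ∉ arcB α b := by
  have ha0 := rep_nonneg α; have ha1 := rep_lt_one α
  cases b <;> intro hmem
  · rw [show openArcB α (!false) = openArcL α from rfl, mem_openArcL_iff] at h
    rw [show arcB α false = arcR α from rfl, mem_arcR_iff] at hmem
    rcases hmem with hm | hm <;> [linarith [h.1]; linarith [h.2]]
  · rw [show openArcB α (!true) = openArcR α from rfl, mem_openArcR_iff] at h
    rw [show arcB α true = arcL α from rfl, mem_arcL_iff] at hmem
    rcases h with hm | hm <;> [linarith [hmem.1]; linarith [hmem.2]]

lemma openArcB_subset_arcB (b : Bool) : openArcB α b ⊆ arcB α b := by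
  intro x h
  cases b
  · rw [show openArcB α false = openArcR α from rfl, mem_openArcR_iff] at h
    rw [show arcB α false = arcR α from rfl, mem_arcR_iff]
    rcases h with h | h
    · left; linarith
    · right; linarith
  · rw [show openArcB α true = openArcL α from rfl, mem_openArcL_iff] at h
    rw [show arcB α true = arcL α from rfl, mem_arcL_iff]
    exact ⟨le_of_lt h.1, le_of_lt h.2⟩

lemma star_mem_arcB {s : 𝕋} (hs : IsStar α s) (c : Bool) : s ∈ arcB α c := by
  have ha0 := rep_nonneg α; have ha1 := rep_lt_one α
  have hrs : rep s = rep α / 2 ∨ rep s = rep α / 2 + 1/2 := by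
    rcases hs with rfl | rfl
    · left; exact rep_star1
    · right; exact rep_star2
  cases c
  · rw [show arcB α false = arcR α from rfl, mem_arcR_iff]
    rcases hrs with h | h
    · left; linarith
    · right; linarith
  · rw [show arcB α true = arcL α from rfl, mem_arcL_iff]
    rcases hrs with h | h <;> constructor <;> linarith

lemma openArcB_disj {x : 𝕋} {b : Bool} (h : x ∈ openArcB α (!b)) :
    x ∉ openArcB α b :=
  fun h2 => openArcB_not_mem_arcB h (openArcB_subset_arcB b h2)

end Arcs

lemma cylSet_nil (α : 𝕋) : cylSet α [] = Set.univ := by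
  ext x; simp [cylSet]

lemma cylSet_cons (α : 𝕋) (ℓ : Letter) (u : List Letter) :
    cylSet α (ℓ :: u) = semi α ℓ ∩ dbl ⁻¹' (cylSet α u) := by
  ext x
  simp only [cylSet, mem_setOf_eq, Set.mem_inter_iff, Set.mem_preimage, List.length_cons]
  constructor
  · intro h
    refine ⟨by simpa using h 0 (Nat.succ_pos _), fun i hi => ?_⟩
    have := h (i + 1) (by omega)
    simpa [Function.iterate_succ_apply] using this
  · rintro ⟨h0, h⟩ i hi
    cases i with
    | zero => simpa using h0
    | succ i =>
        have := h i (by omega)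
        simpa [Function.iterate_succ_apply] using this

/-- the legal word. -/
noncomputable def legal (α : 𝕋) : List Bool → List Letter
  | [] => []
  | b :: g =>
      (if g = [] then letterOf b
       else if α ∈ cylSet α (legal α g) then Letter.star else letterOf b) :: legal α g

lemma legal_length (α : 𝕋) (g : List Bool) : (legal α g).length = g.length := by
  induction g with
  | nil => rfl
  | cons b g ih => simp [legal, ih]

lemma legal_getD (α : 𝕋) (g : List Bool) (i : ℕ) :
    (legal α g).getD i Letter.star = letterOf (g.getD i true) ∨
      (legal α g).getD i Letter.star = Letter.star := by
  induction g generalizing i with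
  | nil => right; rfl
  | cons b g ih =>
      cases i with
      | zero =>
          simp only [legal, List.getD_cons_zero]
          split_ifs <;> [left; right; left] <;> rfl
      | succ i =>
          simp only [legal, List.getD_cons_succ]
          exact ih i

/-- the target set : intersection of the sides (of all level-(n-1) chords) containing
`g̃(⋆₁)`. -/
def Tset (α : 𝕋) (g : List Bool) : Set 𝕋 :=
  {x | ∀ w : List Bool, w.length = g.length - 1 →
    SideOK (wtld α w (star1 α)) (wtld α w (star2 α)) (wtld α g (star1 α)) x}

end St12
namespace St12
open Real Set

lemma dbl_alpha_ne {α : 𝕋} (hα : ¬ Periodic' α) : dbl α ≠ α := by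
  intro h
  exact hα ⟨1, le_refl 1, by simpa using h⟩

lemma wtld_ne_of_len {α : 𝕋} (hα : ¬ Periodic' α) {g w : List Bool}
    (hlen : g.length = w.length + 1) {s s' : 𝕋} (hs : IsStar α s) (hs' : IsStar α s') :
    wtld α g s ≠ wtld α w s' := by
  intro h
  have h1 : dbl^[w.length + 2] (wtld α g s) = dbl^[w.length + 2] (wtld α w s') := by rw [h]
  have hL : dbl^[w.length + 2] (wtld α g s) = α := by
    rw [show w.length + 2 = 1 + g.length by omega, Function.iterate_add_apply,
      dbl_iter_wtld]
    simpa using hs.dbl_eq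
  have hR : dbl^[w.length + 2] (wtld α w s') = dbl α := by
    rw [show w.length + 2 = 2 + w.length by omega, Function.iterate_add_apply,
      dbl_iter_wtld]
    have : dbl^[2] s' = dbl (dbl s') := by
      simp [Function.iterate_succ_apply']
    rw [this, hs'.dbl_eq]
  rw [hL, hR] at h1
  exact dbl_alpha_ne hα h1.symm

lemma gcut_inj {c s t : ℝ} (hs0 : 0 ≤ s) (hs1 : s < 1) (ht0 : 0 ≤ t) (ht1 : t < 1)
    (h : gcut c s = gcut c t) : s = t := by
  unfold gcut at h
  split_ifs at h <;> linarith

lemma Hc_inj {α x y : 𝕋} (h : x ≠ y) : Hc α x ≠ Hc α y := by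
  intro hh
  exact h (rep_injective (gcut_inj (rep_nonneg x) (rep_lt_one x) (rep_nonneg y)
    (rep_lt_one y) hh))

lemma mem_Tset_cons {α : 𝕋} {b : Bool} {g' : List Bool} (hg' : g' ≠ []) (x : 𝕋) :
    x ∈ Tset α (b :: g') ↔
      ∀ (c : Bool) (w' : List Bool), w'.length = g'.length - 1 →
        SideOK (tldB α c (wtld α w' (star1 α))) (tldB α c (wtld α w' (star2 α)))
          (wtld α (b :: g') (star1 α)) x := by
  have hg1 : 1 ≤ g'.length := by
    cases g' with
    | nil => exact absurd rfl hg'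
    | cons _ _ => simp
  constructor
  · intro h c w' hw'
    exact h (c :: w') (by simp [hw']; omega)
  · intro h w hw
    simp only [List.length_cons, Nat.succ_sub_one] at hw
    cases w with
    | nil => simp at hw; omega
    | cons c w' =>
        have : w'.length = g'.length - 1 := by simp at hw; omega
        exact h c w' this

lemma star1_isStar {α : 𝕋} : IsStar α (star1 α) := Or.inl rfl
lemma star2_isStar {α : 𝕋} : IsStar α (star2 α) := Or.inr rfl

lemma S1 {α : 𝕋} (hα : ¬ Periodic' α) {b : Bool} {g' : List Bool} (hg' : g' ≠ [])
    {x : 𝕋} (hx : x ∈ openArcB α b) :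
    x ∈ Tset α (b :: g') ↔ dbl x ∈ Tset α g' := by
  have hz' : wtld α g' (star1 α) ≠ α := wtld_ne_alpha hα g' star1_isStar
  have hzmem : wtld α (b :: g') (star1 α) ∈ openArcB α b := by
    rw [wtld_cons]; exact tldB_mem_openArcB b hz'
  have hdblz : dbl (wtld α (b :: g') (star1 α)) = wtld α g' (star1 α) := by
    rw [wtld_cons]; exact dbl_tldB α b _
  rw [mem_Tset_cons hg']
  constructor
  · intro h w'' hw''
    have hP : wtld α w'' (star1 α) ≠ α := wtld_ne_alpha hα w'' star1_isStar
    have hQ : wtld α w'' (star2 α) ≠ α := wtld_ne_alpha hα w'' star2_isStar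
    have := h b w'' hw''
    rwa [master_in_in b hP hQ hx hzmem, hdblz] at this
  · intro h c w' hw'
    have hP : wtld α w' (star1 α) ≠ α := wtld_ne_alpha hα w' star1_isStar
    have hQ : wtld α w' (star2 α) ≠ α := wtld_ne_alpha hα w' star2_isStar
    by_cases hc : c = b
    · subst hc
      rw [master_in_in c hP hQ hx hzmem, hdblz]
      exact h w' hw'
    · have hbc : b = !c := by cases b <;> cases c <;> simp_all
      have hznot : wtld α (b :: g') (star1 α) ∉ openArcB α c :=
        openArcB_disj (by rw [← hbc]; exact hzmem)
      have hxnot : x ∉ openArcB α c := openArcB_disj (by rw [← hbc]; exact hx)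
      rw [SideOK_comm, master_out c hP hQ hznot]
      exact fun hmem => absurd hmem hxnot

lemma S2 {α : 𝕋} (hα : ¬ Periodic' α) {b : Bool} {g' : List Bool} (hg' : g' ≠ [])
    {x : 𝕋} (hx : IsStar α x) :
    x ∈ Tset α (b :: g') ↔ α ∈ Tset α g' := by
  have hz' : wtld α g' (star1 α) ≠ α := wtld_ne_alpha hα g' star1_isStar
  have hzmem : wtld α (b :: g') (star1 α) ∈ openArcB α b := by
    rw [wtld_cons]; exact tldB_mem_openArcB b hz'
  have hdblz : dbl (wtld α (b :: g') (star1 α)) = wtld α g' (star1 α) := by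
    rw [wtld_cons]; exact dbl_tldB α b _
  rw [mem_Tset_cons hg']
  constructor
  · intro h w'' hw''
    have hP : wtld α w'' (star1 α) ≠ α := wtld_ne_alpha hα w'' star1_isStar
    have hQ : wtld α w'' (star2 α) ≠ α := wtld_ne_alpha hα w'' star2_isStar
    have := h b w'' hw''
    rw [master_out b hP hQ (star_not_mem_openArcB hx b)] at this
    have := this hzmem
    rwa [hdblz] at this
  · intro h c w' hw'
    have hP : wtld α w' (star1 α) ≠ α := wtld_ne_alpha hα w' star1_isStar
    have hQ : wtld α w' (star2 α) ≠ α := wtld_ne_alpha hα w' star2_isStar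
    rw [master_out c hP hQ (star_not_mem_openArcB hx c)]
    intro hmem
    by_cases hc : c = b
    · subst hc
      rw [hdblz]
      exact h w' hw'
    · have hbc : b = !c := by cases b <;> cases c <;> simp_all
      exact absurd hmem (openArcB_disj (by rw [← hbc]; exact hzmem))

lemma S3 {α : 𝕋} (hα : ¬ Periodic' α) {b : Bool} {g' : List Bool} (hg' : g' ≠ [])
    {x : 𝕋} (hx : x ∈ openArcB α (!b)) :
    x ∈ Tset α (b :: g') ↔
      (α ∈ Tset α g' ∧ ∀ w' : List Bool, w'.length = g'.length - 1 →
        SideOK (wtld α w' (star1 α)) (wtld α w' (star2 α)) (dbl x) α) := by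
  have hz' : wtld α g' (star1 α) ≠ α := wtld_ne_alpha hα g' star1_isStar
  have hzmem : wtld α (b :: g') (star1 α) ∈ openArcB α b := by
    rw [wtld_cons]; exact tldB_mem_openArcB b hz'
  have hdblz : dbl (wtld α (b :: g') (star1 α)) = wtld α g' (star1 α) := by
    rw [wtld_cons]; exact dbl_tldB α b _
  have hxnotb : x ∉ openArcB α b := openArcB_disj hx
  have hznotnb : wtld α (b :: g') (star1 α) ∉ openArcB α (!b) := by
    apply openArcB_disj; rw [Bool.not_not]; exact hzmem
  rw [mem_Tset_cons hg']
  constructor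
  · intro h
    constructor
    · intro w'' hw''
      have hP : wtld α w'' (star1 α) ≠ α := wtld_ne_alpha hα w'' star1_isStar
      have hQ : wtld α w'' (star2 α) ≠ α := wtld_ne_alpha hα w'' star2_isStar
      have := h b w'' hw''
      rw [master_out b hP hQ hxnotb] at this
      have := this hzmem
      rwa [hdblz] at this
    · intro w' hw'
      have hP : wtld α w' (star1 α) ≠ α := wtld_ne_alpha hα w' star1_isStar
      have hQ : wtld α w' (star2 α) ≠ α := wtld_ne_alpha hα w' star2_isStar
      have := h (!b) w' hw'
      rw [SideOK_comm, master_out (!b) hP hQ hznotnb] at this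
      exact this hx
  · rintro ⟨hA, h2⟩ c w' hw'
    have hP : wtld α w' (star1 α) ≠ α := wtld_ne_alpha hα w' star1_isStar
    have hQ : wtld α w' (star2 α) ≠ α := wtld_ne_alpha hα w' star2_isStar
    by_cases hc : c = b
    · subst hc
      rw [master_out c hP hQ hxnotb]
      intro hmem
      rw [hdblz]
      exact hA w' hw'
    · have hbc : c = !b := by cases b <;> cases c <;> simp_all
      subst hbc
      rw [SideOK_comm, master_out (!b) hP hQ hznotnb]
      intro _
      exact h2 w' hw'

end St12
namespace St12
open Real Set

lemma openArc_trichotomy' {α : 𝕋} (b : Bool) (x : 𝕋) :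
    x ∈ openArcB α b ∨ x ∈ openArcB α (!b) ∨ IsStar α x := by
  cases b
  · rcases openArc_trichotomy (α := α) x with h | h | h
    · right; left; exact h
    · left; exact h
    · right; right; exact h
  · rcases openArc_trichotomy (α := α) x with h | h | h
    · left; exact h
    · right; left; exact h
    · right; right; exact h

lemma side_alpha_iff_side_z {α : 𝕋} (hα : ¬ Periodic' α) {g' w' : List Bool}
    (hg' : g' ≠ []) (hw' : w'.length = g'.length - 1)
    (hA : SideOK (wtld α w' (star1 α)) (wtld α w' (star2 α)) (wtld α g' (star1 α)) α)
    (v : 𝕋) :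
    (SideOK (wtld α w' (star1 α)) (wtld α w' (star2 α)) v α ↔
     SideOK (wtld α w' (star1 α)) (wtld α w' (star2 α)) (wtld α g' (star1 α)) v) := by
  have hg1 : 1 ≤ g'.length := by
    cases g' with
    | nil => exact absurd rfl hg'
    | cons _ _ => simp
  have hP : wtld α w' (star1 α) ≠ α := wtld_ne_alpha hα w' star1_isStar
  have hQ : wtld α w' (star2 α) ≠ α := wtld_ne_alpha hα w' star2_isStar
  have hz'P : wtld α g' (star1 α) ≠ wtld α w' (star1 α) :=
    wtld_ne_of_len hα (by omega) star1_isStar star1_isStar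
  have hz'Q : wtld α g' (star1 α) ≠ wtld α w' (star2 α) :=
    wtld_ne_of_len hα (by omega) star1_isStar star2_isStar
  have h1 : 0 ≤ (Hc α (wtld α g' (star1 α)) - Hc α (wtld α w' (star1 α))) *
      (Hc α (wtld α g' (star1 α)) - Hc α (wtld α w' (star2 α))) :=
    (sideOK_alpha_iff hP hQ _).1 hA
  have h2 : (Hc α (wtld α g' (star1 α)) - Hc α (wtld α w' (star1 α))) *
      (Hc α (wtld α g' (star1 α)) - Hc α (wtld α w' (star2 α))) ≠ 0 :=
    mul_ne_zero (sub_ne_zero.2 (Hc_inj hz'P)) (sub_ne_zero.2 (Hc_inj hz'Q))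
  have hpos := lt_of_le_of_ne h1 (Ne.symm h2)
  rw [sideOK_alpha_iff hP hQ v, sideOK_iff_H α _ _ _ v, iff_posright hpos]

lemma base_side {α : 𝕋} (hα : ¬ Periodic' α) (b : Bool) (x : 𝕋) :
    SideOK (star1 α) (star2 α) (tldB α b (star1 α)) x ↔ x ∈ arcB α b := by
  have ha := repα_pos hα
  have ha1 := rep_lt_one α
  have hx0 := rep_nonneg x; have hx1 := rep_lt_one x
  have hst : rep (star1 α) = rep α / 2 := rep_star1
  have hst2 : rep (star2 α) = rep α / 2 + 1/2 := rep_star2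
  have hlt : rep α / 2 < rep α / 2 + 1/2 := by linarith
  cases b
  · have hz : rep (tldB α false (star1 α)) = rep α / 4 := by
      show rep (tldR α (star1 α)) = _
      rw [rep_tldR_of_lt α (by rw [hst]; linarith), hst]; ring
    unfold SideOK
    rw [hz, hst, hst2]
    have hpz : 0 < (rep α / 4 - rep α / 2) * (rep α / 4 - (rep α / 2 + 1/2)) :=
      mul_pos_of_neg_of_neg (by linarith) (by linarith)
    rw [iff_posright hpz, quad_outside hlt,
      show arcB α false = arcR α from rfl, mem_arcR_iff]
  · have hz : rep (tldB α true (star1 α)) = rep α / 4 + 1/2 := by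
      show rep (tldL α (star1 α)) = _
      rw [rep_tldL_of_le α (by rw [hst]; linarith), hst]; ring
    unfold SideOK
    rw [hz, hst, hst2]
    have hpz : (rep α / 4 + 1/2 - rep α / 2) * (rep α / 4 + 1/2 - (rep α / 2 + 1/2)) < 0 :=
      mul_neg_of_pos_of_neg (by linarith) (by linarith)
    rw [iff_negright hpz, quad_between hlt,
      show arcB α true = arcL α from rfl, mem_arcL_iff]

theorem Tset_eq {α : 𝕋} (hα : ¬ Periodic' α) :
    ∀ g : List Bool, g ≠ [] → cylSet α (legal α g) = Tset α g := by
  intro g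
  induction g with
  | nil => intro h; exact absurd rfl h
  | cons b g' ih =>
    intro _
    by_cases hg' : g' = []
    · subst hg'
      have hl : legal α [b] = [letterOf b] := by simp [legal]
      rw [hl, cylSet_cons, cylSet_nil, semi_letterOf]
      ext x
      simp only [Set.mem_inter_iff, Set.mem_preimage, Set.mem_univ, and_true]
      constructor
      · intro hx w hw
        have hwnil : w = [] := List.length_eq_zero_iff.mp (by simpa using hw)
        subst hwnil
        exact (base_side hα b x).2 hx
      · intro h
        exact (base_side hα b x).1 (h [] rfl)
    · have IH := ih hg'
      by_cases hA : α ∈ Tset α g'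
      · have hlegal : legal α (b :: g') = Letter.star :: legal α g' := by
          rw [legal, if_neg hg', if_pos (by rw [IH]; exact hA)]
        rw [hlegal, cylSet_cons, IH]
        ext x
        simp only [Set.mem_inter_iff, Set.mem_preimage, semi, Set.mem_univ, true_and]
        rcases openArc_trichotomy' (α := α) b x with hx | hx | hx
        · exact (S1 hα hg' hx).symm
        · rw [S3 hα hg' hx]
          constructor
          · intro h
            exact ⟨hA, fun w' hw' =>
              (side_alpha_iff_side_z hα hg' hw' (hA w' hw') (dbl x)).2 (h w' hw')⟩
          · rintro ⟨-, h2⟩ w' hw'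
            exact (side_alpha_iff_side_z hα hg' hw' (hA w' hw') (dbl x)).1 (h2 w' hw')
        · rw [S2 hα hg' hx, hx.dbl_eq]
      · have hlegal : legal α (b :: g') = letterOf b :: legal α g' := by
          rw [legal, if_neg hg', if_neg (by rw [IH]; exact hA)]
        rw [hlegal, cylSet_cons, IH, semi_letterOf]
        ext x
        simp only [Set.mem_inter_iff, Set.mem_preimage]
        rcases openArc_trichotomy' (α := α) b x with hx | hx | hx
        · rw [S1 hα hg' hx]
          exact and_iff_right (openArcB_subset_arcB b hx)
        · apply iff_of_false
          · rintro ⟨h1, -⟩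
            exact openArcB_not_mem_arcB hx h1
          · intro hmem
            exact hA ((S3 hα hg' hx).1 hmem).1
        · apply iff_of_false
          · rintro ⟨-, h2⟩
            rw [hx.dbl_eq] at h2
            exact hA h2
          · intro hmem
            exact hA ((S2 hα hg' hx).1 hmem)

end St12
namespace St12
open Real Set

lemma trig_id (x p q : ℝ) :
    (Real.cos (2*q) - Real.cos (2*p)) * (Real.sin (2*x) - Real.sin (2*p))
    - (Real.sin (2*q) - Real.sin (2*p)) * (Real.cos (2*x) - Real.cos (2*p))
    = 4 * Real.sin (x - p) * Real.sin (x - q) * Real.sin (q - p) := by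
  have hx := Real.sin_sq_add_cos_sq x
  have hp := Real.sin_sq_add_cos_sq p
  have hq := Real.sin_sq_add_cos_sq q
  rw [Real.sin_two_mul, Real.sin_two_mul, Real.sin_two_mul, Real.cos_two_mul,
    Real.cos_two_mul, Real.cos_two_mul, Real.sin_sub, Real.sin_sub, Real.sin_sub]
  linear_combination (-(4:ℝ) * (cos q * cos p^2 * sin q - cos q^2 * cos p * sin p)) * hx
    + (-(4:ℝ) * (cos q^2 * sin x * cos x - cos q * cos x^2 * sin q)) * hp
    + (-(4:ℝ) * (cos p * cos x^2 * sin p - cos p^2 * sin x * cos x)) * hq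

lemma emb_eq (x : 𝕋) : emb x = Complex.exp (((2 * Real.pi * rep x : ℝ) : ℂ) * Complex.I) := by
  rw [emb]
  congr 1
  push_cast
  ring

lemma emb_re (x : 𝕋) : (emb x).re = Real.cos (2 * Real.pi * rep x) := by
  rw [emb_eq]; exact Complex.exp_ofReal_mul_I_re _

lemma emb_im (x : 𝕋) : (emb x).im = Real.sin (2 * Real.pi * rep x) := by
  rw [emb_eq]; exact Complex.exp_ofReal_mul_I_im _

lemma abs_emb (x : 𝕋) : ‖emb x‖ = 1 := by
  rw [emb_eq]; exact Complex.norm_exp_ofReal_mul_I _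

lemma norm_emb (x : 𝕋) : ‖emb x‖ = 1 := abs_emb x

lemma emb_injective : Function.Injective emb := by
  intro x y h
  rw [emb_eq, emb_eq] at h
  rw [Complex.exp_eq_exp_iff_exists_int] at h
  obtain ⟨n, hn⟩ := h
  have him := congrArg Complex.im hn
  simp [Complex.add_im, Complex.mul_im] at him
  -- him : 2 * π * rep x = 2 * π * rep y + n * (2 * π)  (roughly)
  have hpi := Real.pi_pos
  have hx0 := rep_nonneg x; have hx1 := rep_lt_one x
  have hy0 := rep_nonneg y; have hy1 := rep_lt_one y
  have hd : rep x - rep y = n := by nlinarith [him]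
  have h1 : (n : ℝ) < 1 := by linarith
  have h2 : (-1 : ℝ) < n := by linarith
  have hn0 : n = 0 := by
    have h1' : n < 1 := by exact_mod_cast h1
    have h2' : -1 < n := by exact_mod_cast h2
    omega
  apply rep_injective
  rw [hn0] at hd
  simpa using sub_eq_zero.mp (by simpa using hd)

/-- the linear side functional of a chord. -/
noncomputable def Ff (p q : 𝕋) (v : ℂ) : ℝ :=
  ((starRingEnd ℂ) (emb q - emb p) * (v - emb p)).im

lemma Ff_affine (p q : 𝕋) (v w : ℂ) (t : ℝ) :
    Ff p q ((1 - t) • v + t • w) = (1 - t) * Ff p q v + t * Ff p q w := by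
  unfold Ff
  rw [Complex.real_smul, Complex.real_smul]
  set c := (starRingEnd ℂ) (emb q - emb p)
  have : c * (((1 - t : ℝ) : ℂ) * v + ((t : ℝ) : ℂ) * w - emb p)
      = ((1 - t : ℝ) : ℂ) * (c * (v - emb p)) + ((t : ℝ) : ℂ) * (c * (w - emb p)) := by
    push_cast; ring
  rw [this]
  simp [Complex.add_im, Complex.mul_im]

lemma Ff_SI (p q x : 𝕋) :
    Ff p q (emb x) = 4 * Real.sin (Real.pi * (rep x - rep p))
      * Real.sin (Real.pi * (rep x - rep q)) * Real.sin (Real.pi * (rep q - rep p)) := by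
  unfold Ff
  rw [Complex.mul_im]
  simp only [Complex.conj_re, Complex.conj_im, Complex.sub_re, Complex.sub_im]
  rw [emb_re, emb_re, emb_re, emb_im, emb_im, emb_im]
  have := trig_id (Real.pi * rep x) (Real.pi * rep p) (Real.pi * rep q)
  rw [show 2 * (Real.pi * rep x) = 2 * Real.pi * rep x by ring,
    show 2 * (Real.pi * rep p) = 2 * Real.pi * rep p by ring,
    show 2 * (Real.pi * rep q) = 2 * Real.pi * rep q by ring] at this
  rw [show Real.pi * rep x - Real.pi * rep p = Real.pi * (rep x - rep p) by ring,
    show Real.pi * rep x - Real.pi * rep q = Real.pi * (rep x - rep q) by ring,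
    show Real.pi * rep q - Real.pi * rep p = Real.pi * (rep q - rep p) by ring] at this
  linarith [this]

/-- same-sign relation. -/
def SgnEq (x y : ℝ) : Prop := 0 ≤ x * y ∧ (x = 0 ↔ y = 0)

lemma SgnEq.mul {a b c d : ℝ} (h1 : SgnEq a b) (h2 : SgnEq c d) : SgnEq (a*c) (b*d) := by
  constructor
  · have := mul_nonneg h1.1 h2.1
    calc (0:ℝ) ≤ a * b * (c * d) := this
    _ = a * c * (b * d) := by ring
  · rw [mul_eq_zero, mul_eq_zero, h1.2, h2.2]

lemma SgnEq.nonneg_iff {x y : ℝ} (h : SgnEq x y) : 0 ≤ x ↔ 0 ≤ y := by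
  rcases lt_trichotomy x 0 with hx | hx | hx
  · have hy : y ≠ 0 := fun hy => (by rw [h.2.mpr hy] at hx; exact lt_irrefl _ hx)
    have : y < 0 := by rcases lt_trichotomy y 0 with h' | h' | h'
                       · exact h'
                       · exact absurd h' hy
                       · nlinarith [h.1]
    constructor <;> intro <;> linarith
  · have hy := h.2.mp hx
    rw [hx, hy]
  · have hy : y ≠ 0 := fun hy => (by have := h.2.mpr hy; linarith)
    have : 0 < y := by rcases lt_trichotomy y 0 with h' | h' | h'
                       · nlinarith [h.1]
                       · exact absurd h' hy
                       · exact h'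
    constructor <;> intro <;> linarith

lemma sgnEq_sin {t : ℝ} (h1 : -1 < t) (h2 : t < 1) : SgnEq (Real.sin (Real.pi * t)) t := by
  have hpi := Real.pi_pos
  constructor
  · rcases lt_trichotomy t 0 with h | h | h
    · have : Real.sin (Real.pi * t) < 0 := by
        have : Real.sin (-(Real.pi * t)) > 0 :=
          Real.sin_pos_of_pos_of_lt_pi (by nlinarith) (by nlinarith)
        rw [Real.sin_neg] at this; linarith
      nlinarith
    · simp [h]
    · have : 0 < Real.sin (Real.pi * t) :=
        Real.sin_pos_of_pos_of_lt_pi (by nlinarith) (by nlinarith)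
      nlinarith
  · constructor
    · intro h
      by_contra ht
      rcases lt_trichotomy t 0 with h' | h' | h'
      · have : Real.sin (-(Real.pi * t)) > 0 :=
          Real.sin_pos_of_pos_of_lt_pi (by nlinarith) (by nlinarith)
        rw [Real.sin_neg] at this; linarith
      · exact ht h'
      · have : 0 < Real.sin (Real.pi * t) :=
          Real.sin_pos_of_pos_of_lt_pi (by nlinarith) (by nlinarith)
        linarith
    · rintro rfl
      simp

lemma sgnEq_scale {k x y : ℝ} (hk : 0 < k) (h : SgnEq x y) : SgnEq (k * x) y := by
  constructor
  · rw [mul_assoc]; exact mul_nonneg (le_of_lt hk) h.1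
  · rw [mul_eq_zero, h.2]
    constructor
    · rintro (h' | h')
      · exact absurd h' (ne_of_gt hk)
      · exact h'
    · intro h'; right; exact h'

/-- The sign dictionary : products of side functionals vs products of rep differences. -/
lemma FKEY {p q : 𝕋} (hpq : rep p ≠ rep q) (x y : 𝕋) :
    SgnEq (Ff p q (emb x) * Ff p q (emb y))
      ((rep x - rep p) * (rep x - rep q) * ((rep y - rep p) * (rep y - rep q))) := by
  have b : ∀ z w : 𝕋, -1 < rep z - rep w ∧ rep z - rep w < 1 := fun z w =>
    ⟨by linarith [rep_nonneg z, rep_lt_one w], by linarith [rep_lt_one z, rep_nonneg w]⟩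
  have hs := sgnEq_sin (b x p).1 (b x p).2
  have hs2 := sgnEq_sin (b x q).1 (b x q).2
  have hs3 := sgnEq_sin (b y p).1 (b y p).2
  have hs4 := sgnEq_sin (b y q).1 (b y q).2
  have hsq : 0 < 16 * Real.sin (Real.pi * (rep q - rep p)) ^ 2 := by
    have hne : Real.sin (Real.pi * (rep q - rep p)) ≠ 0 := by
      intro h
      have := (sgnEq_sin (b q p).1 (b q p).2).2.mp h
      exact hpq (by linarith)
    positivity
  have key : Ff p q (emb x) * Ff p q (emb y)
      = (16 * Real.sin (Real.pi * (rep q - rep p)) ^ 2) *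
        (Real.sin (Real.pi * (rep x - rep p)) * Real.sin (Real.pi * (rep x - rep q)) *
         (Real.sin (Real.pi * (rep y - rep p)) * Real.sin (Real.pi * (rep y - rep q)))) := by
    rw [Ff_SI, Ff_SI]; ring
  rw [key]
  exact sgnEq_scale hsq (((hs.mul hs2)).mul (hs3.mul hs4))

end St12
namespace St12
open Real Set

lemma finite_words (m : ℕ) : {l : List Bool | l.length = m}.Finite :=
  List.finite_length_eq (α := Bool) m

lemma words_nonempty (m : ℕ) : {l : List Bool | l.length = m}.Nonempty :=
  ⟨List.replicate m true, by simp⟩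

lemma mem_diskMinus_iff {α : 𝕋} {m : ℕ} {v : ℂ} :
    v ∈ diskMinus α m ↔ ‖v‖ ≤ 1 ∧ ∀ w : List Bool, w.length = m →
      v ∉ chord (wtld α w (star1 α)) (wtld α w (star2 α)) := by
  rw [diskMinus, Set.mem_diff, Metric.mem_closedBall, dist_zero_right]
  apply and_congr Iff.rfl
  rw [chordsUnion]
  simp only [Set.mem_iUnion, mem_setOf_eq, not_exists]

lemma Ff_emb_left (p q : 𝕋) : Ff p q (emb p) = 0 := by
  simp [Ff]

lemma Ff_emb_right (p q : 𝕋) : Ff p q (emb q) = 0 := by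
  unfold Ff
  rw [Complex.mul_im]
  simp only [Complex.conj_re, Complex.conj_im, Complex.sub_re, Complex.sub_im]
  ring

lemma chord_subset_line {p q : 𝕋} {v : ℂ} (hv : v ∈ chord p q) : Ff p q v = 0 := by
  rw [chord, segment_eq_image ℝ] at hv
  obtain ⟨t, ht, rfl⟩ := hv
  have := Ff_affine p q (emb p) (emb q) t
  rw [Ff_emb_left, Ff_emb_right] at this
  simpa using this

lemma normSq_combo (p q : 𝕋) (s : ℝ) :
    Complex.normSq (emb p + s • (emb q - emb p)) =
      1 + (s^2 - s) * Complex.normSq (emb q - emb p) := by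
  have hp : Complex.normSq (emb p) = 1 := by rw [Complex.normSq_eq_norm_sq, abs_emb]; norm_num
  have hq : Complex.normSq (emb q) = 1 := by rw [Complex.normSq_eq_norm_sq, abs_emb]; norm_num
  simp only [Complex.normSq_apply, Complex.add_re, Complex.add_im, Complex.sub_re,
    Complex.sub_im, Complex.real_smul, Complex.mul_re, Complex.mul_im,
    Complex.ofReal_re, Complex.ofReal_im] at hp hq ⊢
  linear_combination (1 - s) * hp + s * hq

lemma line_ball_subset_chord {p q : 𝕋} (hpq : emb p ≠ emb q) {v : ℂ}
    (hf : Ff p q v = 0) (hv : ‖v‖ ≤ 1) : v ∈ chord p q := by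
  set D := emb q - emb p with hD
  have hD0 : D ≠ 0 := sub_ne_zero.2 (Ne.symm hpq)
  set w := (v - emb p) / D with hw
  have hvp : v - emb p = w * D := by
    rw [hw]; field_simp
  have hns : 0 < Complex.normSq D := Complex.normSq_pos.2 hD0
  have him : w.im = 0 := by
    have h1 : ((starRingEnd ℂ) D * (v - emb p)).im = 0 := hf
    rw [hvp, show (starRingEnd ℂ) D * (w * D) = w * ((starRingEnd ℂ) D * D) by ring,
      show (starRingEnd ℂ) D * D = (Complex.normSq D : ℂ) by
        rw [mul_comm]; exact Complex.mul_conj D] at h1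
    simp only [Complex.mul_im, Complex.ofReal_re, Complex.ofReal_im, mul_zero,
      zero_add] at h1
    rcases mul_eq_zero.mp h1 with h | h
    · exact h
    · exact absurd h (ne_of_gt hns)
  have hveq : v = emb p + w.re • D := by
    have hwre : w = (w.re : ℂ) := Complex.ext rfl (by simp [him])
    rw [Complex.real_smul, ← hwre, ← hvp]; ring
  have habs : ‖v‖ ≤ 1 := by exact hv
  have hnv : Complex.normSq v ≤ 1 := by
    rw [Complex.normSq_eq_norm_sq]
    nlinarith [norm_nonneg v]
  have hcombo := normSq_combo p q w.re
  rw [← hD, ← hveq] at hcombo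
  have ht : w.re^2 - w.re ≤ 0 := by nlinarith
  have ht0 : 0 ≤ w.re := by nlinarith
  have ht1 : w.re ≤ 1 := by nlinarith
  rw [chord, segment_eq_image' ℝ]
  refine ⟨w.re, ⟨ht0, ht1⟩, ?_⟩
  dsimp only
  rw [← hD]
  exact hveq.symm

end St12
namespace St12
open Real Set Filter Topology

/-- the side functional of the chord labelled by a word. -/
noncomputable def FfW (α : 𝕋) (w : List Bool) : ℂ → ℝ :=
  Ff (wtld α w (star1 α)) (wtld α w (star2 α))

lemma FfW_cont (α : 𝕋) (w : List Bool) : Continuous (FfW α w) := by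
  unfold FfW Ff
  exact Complex.continuous_im.comp
    (continuous_const.mul (continuous_id.sub continuous_const))

lemma wtld_stars_ne (α : 𝕋) (w : List Bool) :
    wtld α w (star1 α) ≠ wtld α w (star2 α) := by
  intro h
  have := congrArg (dbl^[w.length]) h
  rw [dbl_iter_wtld, dbl_iter_wtld] at this
  exact star1_ne_star2 this

lemma embW_ne (α : 𝕋) (w : List Bool) :
    emb (wtld α w (star1 α)) ≠ emb (wtld α w (star2 α)) :=
  fun h => wtld_stars_ne α w (emb_injective h)

lemma convex_side (p q : 𝕋) (k : ℝ) : Convex ℝ {v : ℂ | 0 < Ff p q v * k} := by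
  set c := (starRingEnd ℂ) (emb q - emb p) with hc
  have hlin : IsLinearMap ℝ (fun v : ℂ => (c * v).im) := by
    constructor
    · intro a b; rw [mul_add, Complex.add_im]
    · intro r a
      rw [Complex.real_smul, show c * ((r:ℝ) * a) = (r:ℝ) * (c * a) by ring]
      simp [Complex.mul_im]
  have hFf : ∀ v : ℂ, Ff p q v = (c * v).im - (c * emb p).im := by
    intro v; unfold Ff; rw [← hc, mul_sub, Complex.sub_im]
  rcases lt_trichotomy k 0 with hk | hk | hk
  · have : {v : ℂ | 0 < Ff p q v * k} = {v : ℂ | (c * v).im < (c * emb p).im} := by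
      ext v
      simp only [mem_setOf_eq, hFf]
      constructor <;> intro h <;> nlinarith
    rw [this]
    exact convex_halfSpace_lt hlin _
  · simp only [hk, mul_zero, lt_irrefl, setOf_false]
    exact convex_empty
  · have : {v : ℂ | 0 < Ff p q v * k} = {v : ℂ | (c * emb p).im < (c * v).im} := by
      ext v
      simp only [mem_setOf_eq, hFf]
      constructor <;> intro h <;> nlinarith
    rw [this]
    exact convex_halfSpace_gt hlin _

lemma exists_inner {α : 𝕋} (m : ℕ) (v : ℂ) (hv1 : ‖v‖ ≤ 1)
    (hf : ∀ w : List Bool, w.length = m → FfW α w v ≠ 0) :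
    ∃ v' : ℂ, ‖v'‖ < 1 ∧ ∀ w : List Bool, w.length = m → 0 < FfW α w v' * FfW α w v := by
  classical
  set S := (finite_words m).toFinset with hS
  have hmemS : ∀ w : List Bool, w ∈ S ↔ w.length = m := by
    intro w; rw [hS, Set.Finite.mem_toFinset]; rfl
  have hSne : S.Nonempty := by
    obtain ⟨w, hw⟩ := words_nonempty m
    exact ⟨w, (hmemS w).2 hw⟩
  set M := S.inf' hSne (fun w => |FfW α w v|) with hM
  set K := S.sup' hSne (fun w => |FfW α w 0|) with hK
  have hMpos : 0 < M := by
    rw [hM, Finset.lt_inf'_iff]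
    intro w hw
    exact abs_pos.2 (hf w ((hmemS w).1 hw))
  have hK0 : 0 ≤ K := by
    obtain ⟨w, hw⟩ := hSne
    exact le_trans (abs_nonneg _) (Finset.le_sup' (fun w => |FfW α w 0|) hw)
  set ε := M / (M + K + 1) with hε
  have hden : 0 < M + K + 1 := by linarith
  have hε0 : 0 < ε := div_pos hMpos hden
  have hε1 : ε < 1 := by rw [hε, div_lt_one hden]; linarith
  have hcoef : (1 - ε) * M - ε * K = M / (M + K + 1) := by
    rw [hε]; field_simp; ring
  have hcoefpos : 0 < (1 - ε) * M - ε * K := by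
    rw [hcoef]; exact div_pos hMpos hden
  refine ⟨(1 - ε) • v, ?_, ?_⟩
  · rw [norm_smul, Real.norm_eq_abs, abs_of_pos (by linarith : (0:ℝ) < 1 - ε)]
    nlinarith [norm_nonneg v]
  · intro w hw
    have hwS : w ∈ S := (hmemS w).2 hw
    have hMw : M ≤ |FfW α w v| := Finset.inf'_le _ hwS
    have hKw : |FfW α w 0| ≤ K := Finset.le_sup' (fun w => |FfW α w 0|) hwS
    have haff : FfW α w ((1 - ε) • v) = (1 - ε) * FfW α w v + ε * FfW α w 0 := by
      have h := Ff_affine (wtld α w (star1 α)) (wtld α w (star2 α)) v 0 ε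
      rw [smul_zero, add_zero] at h
      exact h
    rw [haff]
    set F := FfW α w v
    set F0 := FfW α w 0
    have hFF : F * F = |F| * |F| := (abs_mul_abs_self F).symm
    have hF0F : -( |F0| * |F| ) ≤ F0 * F := by
      rw [← abs_mul]; exact neg_abs_le _
    have key : 0 < (1 - ε) * (F * F) + ε * (F0 * F) := by
      have h1 : (1 - ε) * (F * F) ≥ (1 - ε) * (M * |F|) := by
        rw [hFF]
        apply mul_le_mul_of_nonneg_left _ (by linarith : (0:ℝ) ≤ 1 - ε)
        exact mul_le_mul_of_nonneg_right hMw (abs_nonneg F)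
      have h2 : ε * (F0 * F) ≥ - (ε * (K * |F|)) := by
        have := mul_le_mul_of_nonneg_left
          (mul_le_mul_of_nonneg_right hKw (abs_nonneg F)) (le_of_lt hε0)
        nlinarith [hF0F, hε0]
      have h3 : ((1 - ε) * M - ε * K) * |F| > 0 :=
        mul_pos hcoefpos (lt_of_lt_of_le hMpos hMw)
      nlinarith
    calc (0:ℝ) < (1 - ε) * (F * F) + ε * (F0 * F) := key
    _ = ((1 - ε) * F + ε * F0) * F := by ring

lemma ballU_subset_diskMinus {α : 𝕋} (m : ℕ) {k : List Bool → ℝ}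
    (v : ℂ) (hb : ‖v‖ ≤ 1)
    (hu : ∀ w : List Bool, w.length = m → 0 < FfW α w v * k w) :
    v ∈ diskMinus α m := by
  rw [mem_diskMinus_iff]
  refine ⟨hb, fun w hw hc => ?_⟩
  have h0 : FfW α w v = 0 := chord_subset_line hc
  have := hu w hw
  rw [h0, zero_mul] at this
  exact lt_irrefl _ this

lemma comp_eq {α : 𝕋} (m : ℕ) {z₀ : ℂ} (hz₀ : z₀ ∈ diskMinus α m) :
    connectedComponentIn (diskMinus α m) z₀ =
      diskMinus α m ∩
        {v : ℂ | ∀ w : List Bool, w.length = m → 0 < FfW α w v * FfW α w z₀} := by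
  have hz₀' := mem_diskMinus_iff.1 hz₀
  have hz0f : ∀ w : List Bool, w.length = m → FfW α w z₀ ≠ 0 := by
    intro w hw h0
    exact hz₀'.2 w hw (line_ball_subset_chord (embW_ne α w) h0 hz₀'.1)
  have hvf : ∀ v ∈ diskMinus α m, ∀ w : List Bool, w.length = m → FfW α w v ≠ 0 := by
    intro v hv w hw h0
    exact (mem_diskMinus_iff.1 hv).2 w hw
      (line_ball_subset_chord (embW_ne α w) h0 (mem_diskMinus_iff.1 hv).1)
  set U := {v : ℂ | ∀ w : List Bool, w.length = m → 0 < FfW α w v * FfW α w z₀} with hU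
  have hUeq : U = ⋂ w ∈ {l : List Bool | l.length = m},
      {v : ℂ | 0 < FfW α w v * FfW α w z₀} := by
    ext v; simp [hU]
  have hUopen : IsOpen U := by
    rw [hUeq]
    exact (finite_words m).isOpen_biInter
      (fun w _ => isOpen_lt continuous_const ((FfW_cont α w).mul continuous_const))
  set V := {v : ℂ | ∃ w : List Bool, w.length = m ∧ FfW α w v * FfW α w z₀ < 0} with hV
  have hVeq : V = ⋃ w ∈ {l : List Bool | l.length = m},
      {v : ℂ | FfW α w v * FfW α w z₀ < 0} := by
    ext v; simp [hV]
  have hVopen : IsOpen V := by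
    rw [hVeq]
    exact isOpen_biUnion
      (fun w _ => isOpen_lt ((FfW_cont α w).mul continuous_const) continuous_const)
  have hdisj : Disjoint U V := by
    rw [Set.disjoint_left]
    rintro v hu ⟨w, hw, hlt⟩
    exact absurd (hu w hw) (not_lt.2 (le_of_lt hlt))
  have hsub : diskMinus α m ⊆ U ∪ V := by
    intro v hv
    by_cases h : ∀ w : List Bool, w.length = m → 0 < FfW α w v * FfW α w z₀
    · left; exact h
    · right
      push_neg at h
      obtain ⟨w, hw, hle⟩ := h
      exact ⟨w, hw, lt_of_le_of_ne hle (mul_ne_zero (hvf v hv w hw) (hz0f w hw))⟩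
  have hz₀U : z₀ ∈ U := fun w hw => mul_self_pos.2 (hz0f w hw)
  apply Set.Subset.antisymm
  · intro v hv
    refine ⟨connectedComponentIn_subset _ _ hv, ?_⟩
    have : connectedComponentIn (diskMinus α m) z₀ ⊆ U :=
      IsPreconnected.subset_left_of_subset_union hUopen hVopen hdisj
        (subset_trans (connectedComponentIn_subset _ _) hsub)
        ⟨z₀, mem_connectedComponentIn hz₀, hz₀U⟩
        isPreconnected_connectedComponentIn
    exact this hv
  · have hconv : Convex ℝ (Metric.closedBall (0:ℂ) 1 ∩ U) := by
      apply Convex.inter (convex_closedBall _ _)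
      rw [hUeq]
      exact convex_iInter (fun w => convex_iInter (fun _ => convex_side _ _ _))
    have hDsub : Metric.closedBall (0:ℂ) 1 ∩ U ⊆ diskMinus α m := by
      rintro v ⟨hb, hu⟩
      exact ballU_subset_diskMinus m v (by simpa using hb) hu
    have heq : diskMinus α m ∩ U = Metric.closedBall (0:ℂ) 1 ∩ U := by
      apply Set.Subset.antisymm
      · rintro v ⟨hv, hu⟩
        exact ⟨Metric.mem_closedBall.2 (by simpa using (mem_diskMinus_iff.1 hv).1), hu⟩
      · rintro v hv
        exact ⟨hDsub hv, hv.2⟩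
    rw [heq]
    exact hconv.isPreconnected.subset_connectedComponentIn
      ⟨by simpa using hz₀'.1, hz₀U⟩ hDsub

lemma closure_comp {α : 𝕋} (m : ℕ) {z₀ : ℂ} (hz₀ : z₀ ∈ diskMinus α m) :
    closure (connectedComponentIn (diskMinus α m) z₀) =
      Metric.closedBall (0:ℂ) 1 ∩
        {v : ℂ | ∀ w : List Bool, w.length = m → 0 ≤ FfW α w v * FfW α w z₀} := by
  have hz₀' := mem_diskMinus_iff.1 hz₀
  have hz0f : ∀ w : List Bool, w.length = m → FfW α w z₀ ≠ 0 := by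
    intro w hw h0
    exact hz₀'.2 w hw (line_ball_subset_chord (embW_ne α w) h0 hz₀'.1)
  obtain ⟨v', hv'1, hv'2⟩ := exists_inner m z₀ hz₀'.1 hz0f
  apply Set.Subset.antisymm
  · apply closure_minimal
    · rw [comp_eq m hz₀]
      rintro v ⟨hv, hu⟩
      exact ⟨Metric.mem_closedBall.2 (by simpa using (mem_diskMinus_iff.1 hv).1),
        fun w hw => le_of_lt (hu w hw)⟩
    · apply IsClosed.inter Metric.isClosed_closedBall
      have : {v : ℂ | ∀ w : List Bool, w.length = m → 0 ≤ FfW α w v * FfW α w z₀}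
          = ⋂ w ∈ {l : List Bool | l.length = m},
            {v : ℂ | 0 ≤ FfW α w v * FfW α w z₀} := by
        ext v; simp
      rw [this]
      exact isClosed_biInter
        (fun w _ => isClosed_le continuous_const ((FfW_cont α w).mul continuous_const))
  · rintro y ⟨hyb, hy⟩
    have hyb' : ‖y‖ ≤ 1 := by simpa using hyb
    have hseq : ∀ n : ℕ, y + (1/(n+1 : ℝ)) • (v' - y) ∈
        connectedComponentIn (diskMinus α m) z₀ := by
      intro n
      set t : ℝ := 1/(n+1 : ℝ) with htdef
      have ht0 : 0 < t := by positivity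
      have ht1 : t ≤ 1 := by
        rw [htdef]
        rw [div_le_one (by positivity)]
        have : (0:ℝ) ≤ n := Nat.cast_nonneg n
        linarith
      have hcombo : y + t • (v' - y) = (1 - t) • y + t • v' := by
        rw [smul_sub, sub_smul, one_smul]; abel
      have hnorm : ‖y + t • (v' - y)‖ < 1 := by
        rw [hcombo]
        calc ‖(1 - t) • y + t • v'‖ ≤ ‖(1 - t) • y‖ + ‖t • v'‖ := norm_add_le _ _
        _ = (1 - t) * ‖y‖ + t * ‖v'‖ := by
            rw [norm_smul, norm_smul, Real.norm_eq_abs, Real.norm_eq_abs,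
              abs_of_nonneg (by linarith), abs_of_pos ht0]
        _ < 1 := by nlinarith [norm_nonneg y]
      have hUmem : ∀ w : List Bool, w.length = m →
          0 < FfW α w (y + t • (v' - y)) * FfW α w z₀ := by
        intro w hw
        have haff : FfW α w ((1 - t) • y + t • v')
            = (1 - t) * FfW α w y + t * FfW α w v' :=
          Ff_affine _ _ y v' t
        rw [hcombo, haff]
        have h1 := hy w hw
        have h2 := hv'2 w hw
        nlinarith
      rw [comp_eq m hz₀]
      exact ⟨ballU_subset_diskMinus m _ (le_of_lt hnorm) hUmem, hUmem⟩
    have htend : Tendsto (fun n : ℕ => y + (1/(n+1 : ℝ)) • (v' - y)) atTop (𝓝 y) := by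
      have h1 : Tendsto (fun n : ℕ => (1/(n+1 : ℝ))) atTop (𝓝 0) :=
        tendsto_one_div_add_atTop_nhds_zero_nat
      have h2 : Tendsto (fun n : ℕ => (1/(n+1 : ℝ)) • (v' - y)) atTop (𝓝 0) := by
        have := h1.smul_const (v' - y)
        simpa using this
      have h3 := (tendsto_const_nhds (x := y) (f := atTop (α := ℕ))).add h2
      simpa using h3
    exact mem_closure_of_tendsto htend (Filter.Eventually.of_forall hseq)

end St12
namespace St12
open Real Set

lemma rep_ne_of_ne {x y : 𝕋} (h : x ≠ y) : rep x ≠ rep y :=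
  fun hh => h (rep_injective hh)

lemma FfW_def (α : 𝕋) (w : List Bool) (v : ℂ) :
    FfW α w v = Ff (wtld α w (star1 α)) (wtld α w (star2 α)) v := rfl

lemma SideOK_def (P Q w x : 𝕋) : SideOK P Q w x ↔
    0 ≤ (rep x - rep P) * (rep x - rep Q) * ((rep w - rep P) * (rep w - rep Q)) :=
  Iff.rfl

lemma Ff_emb_ne_zero {α : 𝕋} (hα : ¬ Periodic' α) {g w : List Bool} (hg : g ≠ [])
    (hw : w.length = g.length - 1) :
    FfW α w (emb (wtld α g (star1 α))) ≠ 0 := by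
  have hg1 : 1 ≤ g.length := by
    cases g with
    | nil => exact absurd rfl hg
    | cons _ _ => simp
  have hzP : wtld α g (star1 α) ≠ wtld α w (star1 α) :=
    wtld_ne_of_len hα (by omega) star1_isStar star1_isStar
  have hzQ : wtld α g (star1 α) ≠ wtld α w (star2 α) :=
    wtld_ne_of_len hα (by omega) star1_isStar star2_isStar
  have hpq : rep (wtld α w (star1 α)) ≠ rep (wtld α w (star2 α)) :=
    rep_ne_of_ne (wtld_stars_ne α w)
  intro h0
  rw [FfW_def] at h0
  have hkey := (FKEY hpq (wtld α g (star1 α)) (wtld α g (star1 α))).2.1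
    (by rw [h0, mul_zero])
  set A := rep (wtld α g (star1 α)) - rep (wtld α w (star1 α)) with hA
  set B := rep (wtld α g (star1 α)) - rep (wtld α w (star2 α)) with hB
  have hA0 : A ≠ 0 := sub_ne_zero.2 (rep_ne_of_ne hzP)
  have hB0 : B ≠ 0 := sub_ne_zero.2 (rep_ne_of_ne hzQ)
  have h2 : A * B * (A * B) = 0 := hkey
  have h3 : A * B = 0 := by nlinarith [h2]
  rcases mul_eq_zero.mp h3 with h | h
  · exact hA0 h
  · exact hB0 h

lemma side_iff_F {α : 𝕋} (hα : ¬ Periodic' α) {g w : List Bool} (hg : g ≠ [])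
    (hw : w.length = g.length - 1) {k : ℝ}
    (hk : 0 < FfW α w (emb (wtld α g (star1 α))) * k) (x : 𝕋) :
    (0 ≤ FfW α w (emb x) * k ↔
      SideOK (wtld α w (star1 α)) (wtld α w (star2 α)) (wtld α g (star1 α)) x) := by
  have hpq : rep (wtld α w (star1 α)) ≠ rep (wtld α w (star2 α)) :=
    rep_ne_of_ne (wtld_stars_ne α w)
  have hk' : 0 < k * FfW α w (emb (wtld α g (star1 α))) := by
    rw [mul_comm]; exact hk
  rw [iff_posmul (P := FfW α w (emb x)) hk', FfW_def, FfW_def, SideOK_def]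
  exact (FKEY hpq x (wtld α g (star1 α))).nonneg_iff

theorem isGCS_Tset {α : 𝕋} (hα : ¬ Periodic' α) {g : List Bool} (hg : g ≠ []) :
    IsGCS α (g.length - 1) (Tset α g) := by
  set m := g.length - 1 with hm
  set z := wtld α g (star1 α) with hzdef
  have hstrict : ∀ w : List Bool, w.length = m → FfW α w (emb z) ≠ 0 :=
    fun w hw => Ff_emb_ne_zero hα hg hw
  obtain ⟨v', hv'1, hv'2⟩ := exists_inner m (emb z) (le_of_eq (norm_emb z)) hstrict
  have hv'mem : v' ∈ diskMinus α m :=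
    ballU_subset_diskMinus m v' (le_of_lt hv'1) hv'2
  refine ⟨v', hv'mem, ?_⟩
  rw [closure_comp m hv'mem]
  ext x
  simp only [Tset, mem_setOf_eq, Set.mem_inter_iff, Metric.mem_closedBall,
    dist_zero_right]
  rw [show ‖emb x‖ = 1 from norm_emb x]
  simp only [le_refl, true_and]
  apply forall_congr'
  intro w
  by_cases hw : w.length = m
  · simp only [hw, forall_true_left]
    have hk : 0 < FfW α w (emb z) * FfW α w v' := by
      have := hv'2 w hw; linarith [mul_comm (FfW α w v') (FfW α w (emb z)), this]
    rw [imp_iff_right hm]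
    exact (side_iff_F hα hg hw hk x).symm
  · constructor
    · intro _ hww; exact absurd hww hw
    · intro _ hww; exact absurd hww hw

theorem trace_unique {α : 𝕋} (hα : ¬ Periodic' α) {g : List Bool} (hg : g ≠ [])
    {C : Set 𝕋} (hC : IsGCS α (g.length - 1) C) (hz : wtld α g (star1 α) ∈ C) :
    C = Tset α g := by
  set m := g.length - 1 with hm
  set z := wtld α g (star1 α) with hzdef
  obtain ⟨z₀, hz₀, hCeq⟩ := hC
  have hz₀' := mem_diskMinus_iff.1 hz₀
  have hz0f : ∀ w : List Bool, w.length = m → FfW α w z₀ ≠ 0 := by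
    intro w hw h0
    exact hz₀'.2 w hw (line_ball_subset_chord (embW_ne α w) h0 hz₀'.1)
  have hCeq2 : C = {x : 𝕋 | ∀ w : List Bool, w.length = m →
      0 ≤ FfW α w (emb x) * FfW α w z₀} := by
    rw [hCeq, closure_comp m hz₀]
    ext x
    simp only [mem_setOf_eq, Set.mem_inter_iff, Metric.mem_closedBall, dist_zero_right]
    rw [show ‖emb x‖ = 1 from norm_emb x]
    simp only [le_refl, true_and]
  have hzmem : ∀ w : List Bool, w.length = m → 0 ≤ FfW α w (emb z) * FfW α w z₀ := by
    have hz2 := hz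
    rw [hCeq2] at hz2
    exact hz2
  have hzpos : ∀ w : List Bool, w.length = m → 0 < FfW α w (emb z) * FfW α w z₀ := by
    intro w hw
    have hne : FfW α w (emb z) * FfW α w z₀ ≠ 0 :=
      mul_ne_zero (Ff_emb_ne_zero hα hg hw) (hz0f w hw)
    exact lt_of_le_of_ne (hzmem w hw) (Ne.symm hne)
  rw [hCeq2]
  ext x
  simp only [Tset, mem_setOf_eq]
  apply forall_congr'
  intro w
  by_cases hw : w.length = m
  · simp only [hw, forall_true_left]
    rw [imp_iff_right hm]
    exact side_iff_F hα hg hw (hzpos w hw) x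
  · constructor
    · intro _ hww; exact absurd hww hw
    · intro _ hww; exact absurd hww hw

lemma mem_cylSet_legal {α : 𝕋} (hα : ¬ Periodic' α) (g : List Bool) {s : 𝕋}
    (hs : IsStar α s) : wtld α g s ∈ cylSet α (legal α g) := by
  intro i hi
  rw [legal_length] at hi
  have hd := digit_mem hα g hs i hi
  rcases legal_getD α g i with h | h
  · rw [h, semi_letterOf]
    exact openArcB_subset_arcB _ hd
  · rw [h]
    exact Set.mem_univ _

lemma flip_mem {α : 𝕋} (hα : ¬ Periodic' α) {g : List Bool} {u : List Letter}
    (hlen : u.length = g.length)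
    (hcomp : ∀ i < g.length, u.getD i Letter.star ≠ Letter.star →
      u.getD i Letter.star = letterOf (g.getD i true))
    {i : ℕ} (hi : i < g.length) (histar : u.getD i Letter.star = Letter.star) :
    wtld α (g.set i (!(g.getD i true))) (star1 α) ∈ cylSet α u := by
  intro j hj
  rw [hlen] at hj
  have hd := digit_mem hα (g.set i (!(g.getD i true))) star1_isStar j
    (by rw [List.length_set]; exact hj)
  by_cases hij : j = i
  · subst hij
    rw [histar]
    exact Set.mem_univ _
  · have hget : (g.set i (!(g.getD i true))).getD j true = g.getD j true := by
      rw [List.getD_eq_getElem _ _ (by rw [List.length_set]; exact hj),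
        List.getD_eq_getElem _ _ hj]
      rw [List.getElem_set]
      simp [Ne.symm hij]
    rw [hget] at hd
    by_cases hstar : u.getD j Letter.star = Letter.star
    · rw [hstar]; exact Set.mem_univ _
    · rw [hcomp j hj hstar, semi_letterOf]
      exact openArcB_subset_arcB _ hd

lemma flip_not_mem {α : 𝕋} (hα : ¬ Periodic' α) {g : List Bool} {u : List Letter}
    (hlen : u.length = g.length)
    {i : ℕ} (hi : i < g.length)
    (hletter : u.getD i Letter.star = letterOf (g.getD i true)) :
    wtld α (g.set i (!(g.getD i true))) (star1 α) ∉ cylSet α u := by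
  intro hmem
  have h1 := hmem i (by rw [hlen]; exact hi)
  rw [hletter, semi_letterOf] at h1
  have hd := digit_mem hα (g.set i (!(g.getD i true))) star1_isStar i
    (by rw [List.length_set]; exact hi)
  have hget : (g.set i (!(g.getD i true))).getD i true = !(g.getD i true) := by
    rw [List.getD_eq_getElem _ _ (by rw [List.length_set]; exact hi), List.getElem_set]
    simp
  rw [hget] at hd
  exact openArcB_not_mem_arcB hd h1

lemma cyl_inj {α : 𝕋} (hα : ¬ Periodic' α) {g : List Bool} {u u' : List Letter}
    (hlen : u.length = g.length) (hlen' : u'.length = g.length)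
    (hcomp : ∀ i < g.length, u.getD i Letter.star ≠ Letter.star →
      u.getD i Letter.star = letterOf (g.getD i true))
    (hcomp' : ∀ i < g.length, u'.getD i Letter.star ≠ Letter.star →
      u'.getD i Letter.star = letterOf (g.getD i true))
    (hset : cylSet α u = cylSet α u') : u = u' := by
  apply List.ext_getElem (by rw [hlen, hlen'])
  intro i h1 h2
  rw [hlen] at h1
  by_contra hne
  have hgu : u.getD i Letter.star = u[i] := List.getD_eq_getElem _ _ (by rw [hlen]; exact h1)
  have hgu' : u'.getD i Letter.star = u'[i] := List.getD_eq_getElem _ _ h2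
  by_cases hstar : u.getD i Letter.star = Letter.star
  · -- u has star; then u' must not be star (else equal)
    have hstar' : u'.getD i Letter.star ≠ Letter.star := by
      intro hh
      exact hne (by rw [← hgu, ← hgu', hstar, hh])
    have hl' := hcomp' i h1 hstar'
    have hmem := flip_mem hα hlen hcomp h1 hstar
    rw [hset] at hmem
    exact flip_not_mem hα hlen' h1 hl' hmem
  · have hl := hcomp i h1 hstar
    by_cases hstar' : u'.getD i Letter.star = Letter.star
    · have hmem := flip_mem hα hlen' hcomp' h1 hstar'
      rw [← hset] at hmem
      exact flip_not_mem hα hlen h1 hl hmem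
    · have hl' := hcomp' i h1 hstar'
      exact hne (by rw [← hgu, ← hgu', hl, hl'])

end St12


/-- for every `g ∈ {L,R}^n` there is a unique legal word `legal(g)` obtained
from `g` by replacing some digits with `⋆` such that `C(legal(g))` is a generalized cylinder
set of degree `n-1` containing `g̃(⋆₁)` and `g̃(⋆₂)`. -/
theorem stmt_12 (α : 𝕋) (hα : ¬ Periodic' α) (g : List Bool) (hg : g ≠ []) :
    ∃! u : List Letter, IsLegalOf α g u := by
  have hifeq : ∀ b : Bool, (if b then Letter.L else Letter.R) = St12.letterOf b :=
    fun b => rfl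
  refine ⟨St12.legal α g, ⟨St12.legal_length α g, ?_, ?_, ?_, ?_⟩, ?_⟩
  · intro i hi hne
    rcases St12.legal_getD α g i with h | h
    · rw [h, hifeq]
    · exact absurd h hne
  · rw [St12.Tset_eq hα g hg]
    exact St12.isGCS_Tset hα hg
  · exact St12.mem_cylSet_legal hα g St12.star1_isStar
  · exact St12.mem_cylSet_legal hα g St12.star2_isStar
  · rintro u' ⟨hlen', hcomp', hgcs', hmem1', _⟩
    have h1 : cylSet α u' = St12.Tset α g := St12.trace_unique hα hg hgcs' hmem1'
    have h2 : cylSet α (St12.legal α g) = St12.Tset α g := St12.Tset_eq hα g hg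
    exact St12.cyl_inj hα hlen' (St12.legal_length α g)
      (fun i hi hne => by rw [hcomp' i hi hne, hifeq])
      (fun i hi hne => by rcases St12.legal_getD α g i with h | h
                          · rw [h]
                          · exact absurd h hne)
      (h1.trans h2.symm)
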